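/- arXiv:2104.03683 — 5 statements merged into one kernel-verified Lean document; each statement's English description precedes it below -/
import Mathlib

section
/- Under (LD1), the truncated variance satisfies |σ̄² − σ²| ≤ 3·κ·σ²·β₂, where σ̄² = ∑_{i∈J} E[X̄_i Ȳ_i], σ² = Var(∑_{i∈J} X_i), X̄_i = X_i·1{|X_i| ≤ σ/κ}, Ȳ_i = ∑_{j∈A_i} X̄_j, and β₂ = σ^{-2}·∑_{i∈J} E[X_i²·1{|X_i| > σ/κ}]. -/
open MeasureTheory ProbabilityTheory

private lemma tvc_pair_bound (t x y : ℝ) :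
    |x*y - (if |x| ≤ t then x else 0)*(if |y| ≤ t then y else 0)| ≤
      3/2*((if t < |x| then x^2 else 0) + (if t < |y| then y^2 else 0)) := by
  rcases le_or_gt |x| t with hx | hx <;> rcases le_or_gt |y| t with hy | hy
  · simp [hx, hy, not_lt.mpr hx, not_lt.mpr hy]
  · simp only [hx, if_true, not_le.mpr hy, if_false, hy, not_lt.mpr hx, mul_zero, sub_zero]
    rw [abs_mul]
    nlinarith [sq_abs x, sq_abs y, abs_nonneg x, abs_nonneg y,
      mul_le_mul_of_nonneg_right hx (abs_nonneg y)]
  · simp only [hy, if_true, not_le.mpr hx, if_false, hx, not_lt.mpr hy, zero_mul, sub_zero]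
    rw [abs_mul]
    nlinarith [sq_abs x, sq_abs y, abs_nonneg x, abs_nonneg y,
      mul_le_mul_of_nonneg_left hy (abs_nonneg x)]
  · simp only [not_le.mpr hx, not_le.mpr hy, if_false, hx, hy, if_true, mul_zero, sub_zero,
      zero_mul]
    rw [abs_mul]
    nlinarith [sq_abs x, sq_abs y, abs_nonneg x, abs_nonneg y, sq_nonneg (|x|-|y|)]

private lemma tvc_xhat_bound (t x : ℝ) (ht : 0 < t) :
    |x - (if |x| ≤ t then x else 0)| ≤ (if t < |x| then x^2 else 0)/t := by
  rcases le_or_gt |x| t with hx | hx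
  · simp [hx, not_lt.mpr hx]
  · simp only [not_le.mpr hx, if_false, hx, if_true, sub_zero]
    rw [le_div_iff₀ ht]
    nlinarith [sq_abs x, abs_nonneg x]

private lemma tvc_count {ι : Type*} [DecidableEq ι] (J : Finset ι) (A B : ι → Finset ι) (κ : ℝ)
    (G : ι → ℝ) (hG : ∀ k ∈ J, 0 ≤ G k)
    (hAB : ∀ i ∈ J, A i ⊆ B i)
    (hκcard : ∀ k ∈ J, ((J.filter fun j => k ∈ B j).card : ℝ) ≤ κ) :
    ∑ i ∈ J, ∑ j ∈ J, (if j ∈ A i then (if i ∈ A j then 3/2*(G i + G j) else G j) else 0)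
      ≤ 3 * κ * ∑ k ∈ J, G k := by
  have hsplit : ∀ i ∈ J, ∀ j ∈ J,
      (if j ∈ A i then (if i ∈ A j then 3/2*(G i + G j) else G j) else 0)
      = (if j ∈ A i ∧ i ∈ A j then 3/2*(G i) else 0)
        + ((if j ∈ A i ∧ i ∈ A j then 3/2*(G j) else 0)
          + (if j ∈ A i ∧ i ∉ A j then G j else 0)) := by
    intro i _ j _
    by_cases h1 : j ∈ A i <;> by_cases h2 : i ∈ A j <;> simp [h1, h2] <;> ring
  rw [Finset.sum_congr rfl fun i hi => Finset.sum_congr rfl fun j hj => hsplit i hi j hj]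
  simp only [Finset.sum_add_distrib]
  have hswap : (∑ i ∈ J, ∑ j ∈ J, (if j ∈ A i ∧ i ∈ A j then 3/2*(G i) else 0))
      = ∑ i ∈ J, ∑ j ∈ J, (if j ∈ A i ∧ i ∈ A j then 3/2*(G j) else 0) := by
    rw [Finset.sum_comm]
    exact Finset.sum_congr rfl fun i _ => Finset.sum_congr rfl fun j _ =>
      if_congr and_comm rfl rfl
  rw [hswap, ← add_assoc, ← two_mul, Finset.mul_sum]
  simp only [Finset.mul_sum, ← Finset.sum_add_distrib]
  rw [Finset.sum_comm]
  have key : ∀ j ∈ J,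
      (∑ i ∈ J, (2 * (if j ∈ A i ∧ i ∈ A j then 3/2*(G j) else 0)
        + (if j ∈ A i ∧ i ∉ A j then G j else 0))) ≤ 3 * κ * G j := by
    intro j hj
    have hMN : ∀ i ∈ J, (2 * (if j ∈ A i ∧ i ∈ A j then 3/2*(G j) else 0)
        + (if j ∈ A i ∧ i ∉ A j then G j else 0))
        = (if j ∈ A i ∧ i ∈ A j then 3*(G j) else 0)
          + (if j ∈ A i ∧ i ∉ A j then G j else 0) := by
      intro i _
      by_cases h : j ∈ A i ∧ i ∈ A j <;> simp [h] <;> ring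
    rw [Finset.sum_congr rfl hMN, Finset.sum_add_distrib, Finset.sum_ite, Finset.sum_ite]
    simp only [Finset.sum_const, Finset.sum_const_zero, add_zero, nsmul_eq_mul, smul_zero,
      mul_zero]
    set M := J.filter (fun i => j ∈ A i ∧ i ∈ A j) with hM
    set N := J.filter (fun i => j ∈ A i ∧ i ∉ A j) with hN
    set K := J.filter (fun i => j ∈ B i) with hK
    have hMK : M ⊆ K := by
      intro i hi
      simp only [hM, hK, Finset.mem_filter] at hi ⊢
      exact ⟨hi.1, hAB i hi.1 hi.2.1⟩
    have hNK : N ⊆ K := by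
      intro i hi
      simp only [hN, hK, Finset.mem_filter] at hi ⊢
      exact ⟨hi.1, hAB i hi.1 hi.2.1⟩
    have hdisj : Disjoint M N := by
      rw [Finset.disjoint_left]
      intro i hi hi'
      simp only [hM, Finset.mem_filter] at hi
      simp only [hN, Finset.mem_filter] at hi'
      exact hi'.2.2 hi.2.2
    have hcardsum : (M.card : ℝ) + N.card ≤ κ := by
      have h1 : M.card + N.card = (M ∪ N).card := (Finset.card_union_of_disjoint hdisj).symm
      have h2 : (M ∪ N).card ≤ K.card :=
        Finset.card_le_card (Finset.union_subset hMK hNK)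
      have h3 : (((M ∪ N).card : ℕ) : ℝ) ≤ κ := le_trans (Nat.cast_le.mpr h2) (hκcard j hj)
      rw [← h1] at h3
      push_cast at h3
      exact h3
    have hMκ : (M.card : ℝ) ≤ κ :=
      le_trans (Nat.cast_le.mpr (Finset.card_le_card hMK)) (hκcard j hj)
    have hGj := hG j hj
    nlinarith
  exact Finset.sum_le_sum key

/-- Under (LD1), the truncated variance satisfies `|σ̄² − σ²| ≤ 3·κ·σ²·β₂`. -/
theorem truncated_variance_close
    {Ω : Type*} [MeasureSpace Ω] [IsProbabilityMeasure (ℙ : Measure Ω)]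
    {ι : Type*} [DecidableEq ι] (J : Finset ι) (X : ι → Ω → ℝ)
    (A B : ι → Finset ι)
    (hmeas : ∀ i, Measurable (X i))
    (hL2 : ∀ i ∈ J, MemLp (X i) 2 ℙ)
    (hmean : ∀ i ∈ J, (∫ ω, X i ω) = 0)
    (hiA : ∀ i ∈ J, i ∈ A i) (hAJ : ∀ i ∈ J, A i ⊆ J) (hAB : ∀ i ∈ J, A i ⊆ B i)
    -- (LD1): `X i` is independent of `{X j : j ∉ A i}`
    (hLD1 : ∀ i ∈ J, Indep (MeasurableSpace.comap (X i) inferInstance)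
      (⨆ j ∈ J \ A i, MeasurableSpace.comap (X j) inferInstance) ℙ)
    (σ κ : ℝ) (hσ : 0 < σ) (hκ : 1 ≤ κ)
    (hσdef : σ ^ 2 = variance (fun ω => ∑ i ∈ J, X i ω) ℙ)
    (hκcard : ∀ i ∈ J, ((J.filter fun j => i ∈ B j).card : ℝ) ≤ κ)
    -- truncated variables
    (Xb : ι → Ω → ℝ) (hXb : ∀ i, Xb i = fun ω => if |X i ω| ≤ σ / κ then X i ω else 0)
    (Yb : ι → Ω → ℝ) (hYb : ∀ i, Yb i = fun ω => ∑ j ∈ A i, Xb j ω)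
    (σbar2 β₂ : ℝ)
    (hσbar2 : σbar2 = ∑ i ∈ J, ∫ ω, Xb i ω * Yb i ω)
    (hβ₂ : β₂ = σ⁻¹ ^ 2 * ∑ i ∈ J, ∫ ω, (if σ / κ < |X i ω| then (X i ω) ^ 2 else 0)) :
    |σbar2 - σ ^ 2| ≤ 3 * κ * σ ^ 2 * β₂ := by
  have hκ0 : (0:ℝ) < κ := lt_of_lt_of_le one_pos hκ
  have ht : 0 < σ / κ := div_pos hσ hκ0
  set t := σ / κ with htdef
  set φ : ℝ → ℝ := fun x => if |x| ≤ t then x else 0 with hφ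
  have hφm : Measurable φ :=
    Measurable.ite (measurableSet_le measurable_id.abs measurable_const) measurable_id
      measurable_const
  have hXbφ : ∀ i, Xb i = φ ∘ X i := fun i => by rw [hXb i]; rfl
  have hXbm : ∀ i, Measurable (Xb i) := fun i => (hXbφ i) ▸ hφm.comp (hmeas i)
  have hXbbd : ∀ i ω, |Xb i ω| ≤ t := by
    intro i ω
    rw [hXb i]
    dsimp only
    split
    · assumption
    · simpa using ht.le
  have hXbL2 : ∀ i, MemLp (Xb i) 2 ℙ := fun i =>
    MemLp.of_bound (hXbm i).aestronglyMeasurable t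
      (Filter.Eventually.of_forall fun ω => by rw [Real.norm_eq_abs]; exact hXbbd i ω)
  have hXbInt : ∀ i, Integrable (Xb i) ℙ := fun i => (hXbL2 i).integrable one_le_two
  have hXInt : ∀ i ∈ J, Integrable (X i) ℙ := fun i hi => (hL2 i hi).integrable one_le_two
  have hmul : ∀ {f g' : Ω → ℝ}, MemLp f 2 ℙ → MemLp g' 2 ℙ →
      Integrable (fun ω => f ω * g' ω) ℙ := by
    intro f g' hf hg
    have := hf.smul hg (r := 1) (hpqr := ⟨by simp only [one_div, ENNReal.inv_two_add_inv_two, inv_one]⟩)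
    exact (by simpa [smul_eq_mul, mul_comm] using this.integrable le_rfl : Integrable (f * g') ℙ)
  set g : ι → Ω → ℝ := fun i ω => if t < |X i ω| then X i ω ^ 2 else 0 with hgdef
  set G : ι → ℝ := fun i => ∫ ω, g i ω with hGdef
  have hXh2 : ∀ i ∈ J, MemLp (fun ω => X i ω - Xb i ω) 2 ℙ := fun i hi =>
    (hL2 i hi).sub (hXbL2 i)
  have hgeq : ∀ i, g i = fun ω => (X i ω - Xb i ω)^2 := by
    intro i
    funext ω
    rw [hXb i]
    simp only [hgdef]
    rcases le_or_gt |X i ω| t with h | h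
    · simp [h, not_lt.mpr h]
    · simp [h, not_le.mpr h]
  have hgInt : ∀ i ∈ J, Integrable (g i) ℙ := by
    intro i hi
    rw [hgeq i]
    exact (hXh2 i hi).integrable_sq
  have hGnn : ∀ i ∈ J, 0 ≤ G i := by
    intro i _
    refine integral_nonneg fun ω => ?_
    simp only [hgdef, Pi.zero_apply]
    split
    · positivity
    · exact le_refl 0
  have hind : ∀ i ∈ J, ∀ j ∈ J, j ∉ A i → IndepFun (X i) (X j) ℙ := by
    intro i hi j hj hij
    refine indep_of_indep_of_le_right (hLD1 i hi) ?_
    exact le_biSup (fun k => MeasurableSpace.comap (X k) inferInstance)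
      (Finset.mem_sdiff.mpr ⟨hj, hij⟩)
  -- expand σ² as a double sum
  set S : Ω → ℝ := fun ω => ∑ i ∈ J, X i ω with hS
  have hS2 : MemLp S 2 ℙ := by
    have := memLp_finset_sum' J hL2
    convert this using 1
    ext ω
    simp [hS]
  have hES : ∫ ω, S ω = 0 := by
    rw [hS]
    rw [integral_finset_sum J hXInt]
    exact Finset.sum_eq_zero hmean
  have hσ2 : σ ^ 2 = ∑ i ∈ J, ∑ j ∈ J, ∫ ω, X i ω * X j ω := by
    rw [hσdef, variance_eq_sub hS2]
    have h0 : (∫ ω, S ω ∂ℙ) = 0 := hES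
    rw [h0]
    have h1 : (S^2 : Ω → ℝ) = fun ω => ∑ i ∈ J, ∑ j ∈ J, X i ω * X j ω := by
      funext ω
      rw [Pi.pow_apply, hS, sq]
      exact Finset.sum_mul_sum J J _ _
    rw [h1, integral_finset_sum J
      (fun i hi => integrable_finset_sum J (fun j hj => hmul (hL2 i hi) (hL2 j hj)))]
    rw [Finset.sum_congr rfl fun i hi =>
      integral_finset_sum J (fun j hj => hmul (hL2 i hi) (hL2 j hj))]
    ring
  -- expand σbar2 as a double sum
  have hbar : σbar2 = ∑ i ∈ J, ∑ j ∈ J,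
      (if j ∈ A i then ∫ ω, Xb i ω * Xb j ω else 0) := by
    rw [hσbar2]
    refine Finset.sum_congr rfl fun i hi => ?_
    have h1 : (fun ω => Xb i ω * Yb i ω) = fun ω => ∑ j ∈ A i, Xb i ω * Xb j ω := by
      funext ω
      rw [hYb i]
      exact Finset.mul_sum _ _ _
    rw [h1, integral_finset_sum (A i) (fun j _ => hmul (hXbL2 i) (hXbL2 j))]
    rw [Finset.sum_ite_mem, Finset.inter_eq_right.mpr (hAJ i hi)]
  have hdiff : σbar2 - σ^2 = ∑ i ∈ J, ∑ j ∈ J,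
      ((if j ∈ A i then ∫ ω, Xb i ω * Xb j ω else 0) - ∫ ω, X i ω * X j ω) := by
    rw [hbar, hσ2, ← Finset.sum_sub_distrib]
    exact Finset.sum_congr rfl fun i _ => (Finset.sum_sub_distrib _ _).symm
  -- per term bound
  have hterm : ∀ i ∈ J, ∀ j ∈ J,
      |(if j ∈ A i then ∫ ω, Xb i ω * Xb j ω else 0) - ∫ ω, X i ω * X j ω|
      ≤ (if j ∈ A i then (if i ∈ A j then 3/2*(G i + G j) else G j) else 0) := by
    intro i hi j hj
    by_cases h1 : j ∈ A i
    · by_cases h2 : i ∈ A j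
      · -- mutual pair: pointwise truncation bound
        simp only [h1, h2, if_true]
        rw [abs_sub_comm,
          ← integral_sub (hmul (hL2 i hi) (hL2 j hj)) (hmul (hXbL2 i) (hXbL2 j))]
        have hle : ∀ ω, |X i ω * X j ω - Xb i ω * Xb j ω| ≤ 3/2 * (g i ω + g j ω) := by
          intro ω
          rw [hXb i, hXb j]
          simp only [hgdef]
          exact tvc_pair_bound t (X i ω) (X j ω)
        calc |∫ ω, (X i ω * X j ω - Xb i ω * Xb j ω)|
            ≤ ∫ ω, |X i ω * X j ω - Xb i ω * Xb j ω| := by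
              simpa [Real.norm_eq_abs] using
                norm_integral_le_integral_norm (μ := ℙ)
                  (fun ω => X i ω * X j ω - Xb i ω * Xb j ω)
          _ ≤ ∫ ω, 3/2 * (g i ω + g j ω) := by
              refine integral_mono ?_ ?_ hle
              · exact ((hmul (hL2 i hi) (hL2 j hj)).sub (hmul (hXbL2 i) (hXbL2 j))).abs
              · exact (((hgInt i hi).add (hgInt j hj)).const_mul _)
          _ = 3/2 * (G i + G j) := by
              rw [integral_const_mul, integral_add (hgInt i hi) (hgInt j hj)]
      · -- one-sided pair: independence
        simp only [h1, if_true, h2, if_false]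
        have hindij : IndepFun (X i) (X j) ℙ := (hind j hj i hi h2).symm
        have hXX : ∫ ω, X i ω * X j ω = 0 := by
          have : ∫ ω, X i ω * X j ω = (∫ ω, X i ω) * ∫ ω, X j ω :=
            hindij.integral_fun_mul_eq_mul_integral (hXInt i hi).aestronglyMeasurable (hXInt j hj).aestronglyMeasurable
          rw [this, hmean i hi, zero_mul]
        have hindb : IndepFun (Xb i) (Xb j) ℙ := by
          rw [hXbφ i, hXbφ j]
          exact hindij.comp hφm hφm
        have hbb : ∫ ω, Xb i ω * Xb j ω = (∫ ω, Xb i ω) * ∫ ω, Xb j ω :=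
          hindb.integral_fun_mul_eq_mul_integral (hXbInt i).aestronglyMeasurable (hXbInt j).aestronglyMeasurable
        rw [hXX, sub_zero, hbb, abs_mul]
        have h3 : |∫ ω, Xb i ω| ≤ t := by
          calc |∫ ω, Xb i ω| ≤ ∫ ω, |Xb i ω| := by
                simpa [Real.norm_eq_abs] using
                  norm_integral_le_integral_norm (μ := ℙ) (Xb i)
            _ ≤ ∫ _ω, t := integral_mono (hXbInt i).abs (integrable_const t)
                (fun ω => hXbbd i ω)
            _ = t := by simp
        have h4 : |∫ ω, Xb j ω| ≤ G j / t := by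
          have hzero : ∫ ω, Xb j ω = - ∫ ω, (X j ω - Xb j ω) := by
            rw [integral_sub (hXInt j hj) (hXbInt j), hmean j hj, zero_sub, neg_neg]
          rw [hzero, abs_neg]
          calc |∫ ω, (X j ω - Xb j ω)| ≤ ∫ ω, |X j ω - Xb j ω| := by
                simpa [Real.norm_eq_abs] using
                  norm_integral_le_integral_norm (μ := ℙ) (fun ω => X j ω - Xb j ω)
            _ ≤ ∫ ω, g j ω / t := by
                refine integral_mono ((hXh2 j hj).integrable one_le_two).abs
                  ((hgInt j hj).div_const t) (fun ω => ?_)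
                have hb := tvc_xhat_bound t (X j ω) ht
                rw [hXb j]
                simp only [hgdef]
                exact hb
            _ = G j / t := integral_div t _
        calc |∫ ω, Xb i ω| * |∫ ω, Xb j ω| ≤ t * (G j / t) :=
              mul_le_mul h3 h4 (abs_nonneg _) ht.le
          _ = G j := by field_simp
    · -- independent pair: term vanishes
      simp only [h1, if_false]
      rw [zero_sub, abs_neg]
      have : ∫ ω, X i ω * X j ω = (∫ ω, X i ω) * ∫ ω, X j ω :=
        (hind i hi j hj h1).integral_fun_mul_eq_mul_integral (hXInt i hi).aestronglyMeasurable
          (hXInt j hj).aestronglyMeasurable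
      rw [this, hmean i hi, zero_mul, abs_zero]
  -- assemble
  have hmain : |σbar2 - σ^2| ≤ 3 * κ * ∑ k ∈ J, G k := by
    rw [hdiff]
    calc |∑ i ∈ J, ∑ j ∈ J,
          ((if j ∈ A i then ∫ ω, Xb i ω * Xb j ω else 0) - ∫ ω, X i ω * X j ω)|
        ≤ ∑ i ∈ J, |∑ j ∈ J,
          ((if j ∈ A i then ∫ ω, Xb i ω * Xb j ω else 0) - ∫ ω, X i ω * X j ω)| :=
          Finset.abs_sum_le_sum_abs _ _
      _ ≤ ∑ i ∈ J, ∑ j ∈ J,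
          |(if j ∈ A i then ∫ ω, Xb i ω * Xb j ω else 0) - ∫ ω, X i ω * X j ω| :=
          Finset.sum_le_sum fun i _ => Finset.abs_sum_le_sum_abs _ _
      _ ≤ ∑ i ∈ J, ∑ j ∈ J,
          (if j ∈ A i then (if i ∈ A j then 3/2*(G i + G j) else G j) else 0) :=
          Finset.sum_le_sum fun i hi => Finset.sum_le_sum fun j hj => hterm i hi j hj
      _ ≤ 3 * κ * ∑ k ∈ J, G k := tvc_count J A B κ G hGnn hAB hκcard
  have hRHS : 3 * κ * σ ^ 2 * β₂ = 3 * κ * ∑ k ∈ J, G k := by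
    rw [hβ₂]
    have hσne : σ ≠ 0 := ne_of_gt hσ
    rw [show J.sum G = ∑ k ∈ J, G k from rfl]
    field_simp
  rw [hRHS]
  exact hmain
end

section
/- Under (LD1), if β₂ ≤ 1/(150κ), then 0.98·σ² ≤ σ̄² ≤ 1.02·σ², where σ̄² = ∑_{i∈J} E[X̄_i Ȳ_i] and β₂ = σ^{-2}·∑_{i∈J} E[X_i²·1{|X_i| > σ/κ}]. -/
open MeasureTheory ProbabilityTheory

private lemma trunc_pointwise (t a b : ℝ) (ht : 0 < t) :
    |a * b - (if |a| ≤ t then a else 0) * (if |b| ≤ t then b else 0)|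
      ≤ (if t < |a| then a ^ 2 else 0) + (if t < |b| then b ^ 2 else 0) := by
  rcases le_or_gt |a| t with ha | ha <;> rcases le_or_gt |b| t with hb | hb
  · simp [ha, hb, not_lt.2 ha, not_lt.2 hb]
  · simp only [if_pos ha, if_neg (not_le.2 hb), if_neg (not_lt.2 ha), if_pos hb, mul_zero,
      sub_zero]
    rw [abs_mul]
    nlinarith [abs_nonneg a, abs_nonneg b, sq_abs b]
  · simp only [if_pos hb, if_neg (not_le.2 ha), if_neg (not_lt.2 hb), if_pos ha, zero_mul,
      sub_zero]
    rw [abs_mul]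
    nlinarith [abs_nonneg a, abs_nonneg b, sq_abs a]
  · simp only [if_neg (not_le.2 ha), if_neg (not_le.2 hb), if_pos ha, if_pos hb, zero_mul,
      sub_zero]
    rw [abs_mul]
    nlinarith [sq_nonneg (|a| - |b|), sq_abs a, sq_abs b, abs_nonneg a, abs_nonneg b]

set_option maxHeartbeats 2000000 in
/-- Under (LD1), if `β₂ ≤ 1/(150κ)`, then `0.98·σ² ≤ σ̄² ≤ 1.02·σ²`. -/
theorem truncated_variance_comparable
    {Ω : Type*} [MeasureSpace Ω] [IsProbabilityMeasure (ℙ : Measure Ω)]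
    {ι : Type*} [DecidableEq ι] (J : Finset ι) (X : ι → Ω → ℝ)
    (A B : ι → Finset ι)
    (hmeas : ∀ i, Measurable (X i))
    (hL2 : ∀ i ∈ J, MemLp (X i) 2 ℙ)
    (hmean : ∀ i ∈ J, (∫ ω, X i ω) = 0)
    (hiA : ∀ i ∈ J, i ∈ A i) (hAJ : ∀ i ∈ J, A i ⊆ J) (hAB : ∀ i ∈ J, A i ⊆ B i)
    -- (LD1): `X i` is independent of `{X j : j ∉ A i}`
    (hLD1 : ∀ i ∈ J, Indep (MeasurableSpace.comap (X i) inferInstance)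
      (⨆ j ∈ J \ A i, MeasurableSpace.comap (X j) inferInstance) ℙ)
    (σ κ : ℝ) (hσ : 0 < σ) (hκ : 1 ≤ κ)
    (hσdef : σ ^ 2 = variance (fun ω => ∑ i ∈ J, X i ω) ℙ)
    (hκcard : ∀ i ∈ J, ((J.filter fun j => i ∈ B j).card : ℝ) ≤ κ)
    -- truncated variables
    (Xb : ι → Ω → ℝ) (hXb : ∀ i, Xb i = fun ω => if |X i ω| ≤ σ / κ then X i ω else 0)
    (Yb : ι → Ω → ℝ) (hYb : ∀ i, Yb i = fun ω => ∑ j ∈ A i, Xb j ω)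
    (σbar2 β₂ : ℝ)
    (hσbar2 : σbar2 = ∑ i ∈ J, ∫ ω, Xb i ω * Yb i ω)
    (hβ₂ : β₂ = σ⁻¹ ^ 2 * ∑ i ∈ J, ∫ ω, (if σ / κ < |X i ω| then (X i ω) ^ 2 else 0))
    (hβ₂small : β₂ ≤ 1 / (150 * κ)) :
    0.98 * σ ^ 2 ≤ σbar2 ∧ σbar2 ≤ 1.02 * σ ^ 2 := by
  have hκ0 : (0:ℝ) < κ := lt_of_lt_of_le one_pos hκ
  set t : ℝ := σ / κ with htdef
  have ht : 0 < t := div_pos hσ hκ0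
  have habs : ∀ f : Ω → ℝ, |∫ ω, f ω| ≤ ∫ ω, |f ω| := fun f => by
    simpa [Real.norm_eq_abs] using norm_integral_le_integral_norm f
  set E : ι → ℝ := fun i => ∫ ω, (if t < |X i ω| then X i ω ^ 2 else 0) with hEdef
  set q : ι → ℝ := fun i => ∫ ω, Xb i ω with hqdef
  -- basic integrability facts
  have hXint : ∀ i ∈ J, Integrable (X i) ℙ := fun i hi => (hL2 i hi).integrable one_le_two
  have hsqint : ∀ i ∈ J, Integrable (fun ω => X i ω ^ 2) ℙ := fun i hi => (hL2 i hi).integrable_sq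
  have hindmeas : ∀ i, Measurable (fun ω => if t < |X i ω| then X i ω ^ 2 else 0) := fun i =>
    Measurable.ite (measurableSet_lt measurable_const (hmeas i).abs)
      ((hmeas i).pow_const 2) measurable_const
  have hindint : ∀ i ∈ J, Integrable (fun ω => if t < |X i ω| then X i ω ^ 2 else 0) ℙ :=
    fun i hi => (hsqint i hi).mono' (hindmeas i).aestronglyMeasurable
      (Filter.Eventually.of_forall fun ω => by
        rw [Real.norm_eq_abs]
        split_ifs with h
        · rw [abs_of_nonneg (sq_nonneg _)]
        · simpa using sq_nonneg (X i ω))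
  have hEnonneg : ∀ i, 0 ≤ E i := fun i =>
    integral_nonneg fun ω => by by_cases h : t < |X i ω| <;> simp [h, sq_nonneg]
  have hXbmeas : ∀ i, Measurable (Xb i) := fun i => by
    rw [hXb i]
    exact Measurable.ite (measurableSet_le (hmeas i).abs measurable_const) (hmeas i)
      measurable_const
  have hXbbd : ∀ i ω, |Xb i ω| ≤ t := fun i ω => by
    rw [hXb i]; dsimp only; split_ifs with h
    · exact h
    · simpa using ht.le
  have hXbint : ∀ i, Integrable (Xb i) ℙ := fun i =>
    (integrable_const t).mono' (hXbmeas i).aestronglyMeasurable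
      (Filter.Eventually.of_forall fun ω => by simpa [Real.norm_eq_abs] using hXbbd i ω)
  have hXbmulint : ∀ i j, Integrable (fun ω => Xb i ω * Xb j ω) ℙ := fun i j =>
    (integrable_const (t * t)).mono' ((hXbmeas i).mul (hXbmeas j)).aestronglyMeasurable
      (Filter.Eventually.of_forall fun ω => by
        rw [Real.norm_eq_abs, abs_mul]
        exact mul_le_mul (hXbbd i ω) (hXbbd j ω) (abs_nonneg _) ht.le)
  have hmulint : ∀ i ∈ J, ∀ j ∈ J, Integrable (fun ω => X i ω * X j ω) ℙ := fun i hi j hj =>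
    ((hsqint i hi).add (hsqint j hj)).mono' ((hmeas i).mul (hmeas j)).aestronglyMeasurable
      (Filter.Eventually.of_forall fun ω => by
        simp only [Pi.add_apply]
        rw [Real.norm_eq_abs, abs_mul]
        nlinarith [sq_nonneg (|X i ω| - |X j ω|), sq_abs (X i ω), sq_abs (X j ω),
          abs_nonneg (X i ω), abs_nonneg (X j ω)])
  -- independence of far pairs
  have hindepF : ∀ i ∈ J, ∀ j ∈ J, j ∉ A i → IndepFun (X i) (X j) ℙ := by
    intro i hi j hj hji
    rw [IndepFun_iff_Indep]
    refine indep_of_indep_of_le_right (hLD1 i hi) ?_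
    exact le_iSup₂ (f := fun j (_ : j ∈ J \ A i) =>
      MeasurableSpace.comap (X j) inferInstance) j (Finset.mem_sdiff.2 ⟨hj, hji⟩)
  have hφmeas : Measurable (fun y : ℝ => if |y| ≤ t then y else 0) :=
    Measurable.ite (measurableSet_le measurable_abs measurable_const) measurable_id
      measurable_const
  have hXbcomp : ∀ i, Xb i = (fun y => if |y| ≤ t then y else 0) ∘ X i := fun i => by
    rw [hXb i]; rfl
  have hindepFb : ∀ i ∈ J, ∀ j ∈ J, j ∉ A i → IndepFun (Xb i) (Xb j) ℙ := fun i hi j hj hji => by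
    rw [hXbcomp i, hXbcomp j]
    exact (hindepF i hi j hj hji).comp hφmeas hφmeas
  have hfarX : ∀ i ∈ J, ∀ j ∈ J, j ∉ A i → (∫ ω, X i ω * X j ω) = 0 := by
    intro i hi j hj hji
    have h := (hindepF i hi j hj hji).integral_mul_eq_mul_integral (hXint i hi).aestronglyMeasurable (hXint j hj).aestronglyMeasurable
    have h2 : (∫ ω, X i ω * X j ω) = (∫ ω, X i ω) * ∫ ω, X j ω := h
    rw [h2, hmean i hi, zero_mul]
  have hfarXb : ∀ i ∈ J, ∀ j ∈ J, j ∉ A i → (∫ ω, Xb i ω * Xb j ω) = q i * q j := by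
    intro i hi j hj hji
    exact (hindepFb i hi j hj hji).integral_fun_mul_eq_mul_integral (hXbint i).aestronglyMeasurable (hXbint j).aestronglyMeasurable
  -- bound on |q i|
  have hq : ∀ i ∈ J, |q i| ≤ κ / σ * E i := by
    intro i hi
    have h1 : q i = ∫ ω, (Xb i ω - X i ω) := by
      rw [integral_sub (hXbint i) (hXint i hi), hmean i hi, sub_zero]
    rw [h1]
    calc |∫ ω, (Xb i ω - X i ω)| ≤ ∫ ω, |Xb i ω - X i ω| := habs _
      _ ≤ ∫ ω, κ / σ * (if t < |X i ω| then X i ω ^ 2 else 0) := by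
          refine integral_mono ((hXbint i).sub (hXint i hi)).abs
            ((hindint i hi).const_mul _) fun ω => ?_
          rw [hXb i]
          dsimp only
          rcases le_or_gt |X i ω| t with h | h
          · rw [if_pos h, if_neg (not_lt.2 h), sub_self, abs_zero, mul_zero]
          · rw [if_neg (not_le.2 h), if_pos h, zero_sub, abs_neg]
            have hts : t * |X i ω| ≤ X i ω ^ 2 := by nlinarith [sq_abs (X i ω), h.le]
            have hκσ : κ / σ * t = 1 := by
              rw [htdef]; field_simp
            calc |X i ω| = κ / σ * (t * |X i ω|) := by rw [← mul_assoc, hκσ, one_mul]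
              _ ≤ κ / σ * X i ω ^ 2 :=
                  mul_le_mul_of_nonneg_left hts (le_of_lt (div_pos hκ0 hσ))
      _ = κ / σ * E i := by rw [integral_const_mul]
  -- pairwise bound (always valid)
  have hpair : ∀ i ∈ J, ∀ j ∈ J,
      |(∫ ω, X i ω * X j ω) - ∫ ω, Xb i ω * Xb j ω| ≤ E i + E j := by
    intro i hi j hj
    rw [← integral_sub (hmulint i hi j hj) (hXbmulint i j)]
    calc |∫ ω, (X i ω * X j ω - Xb i ω * Xb j ω)|
        ≤ ∫ ω, |X i ω * X j ω - Xb i ω * Xb j ω| := habs _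
      _ ≤ ∫ ω, ((if t < |X i ω| then X i ω ^ 2 else 0) + (if t < |X j ω| then X j ω ^ 2 else 0)) := by
          refine integral_mono (((hmulint i hi j hj).sub (hXbmulint i j)).abs)
            ((hindint i hi).add (hindint j hj)) fun ω => ?_
          rw [hXb i, hXb j]
          exact trunc_pointwise t (X i ω) (X j ω) ht
      _ = E i + E j := integral_add (hindint i hi) (hindint j hj)
  -- variance expansion: σ² = ∑_{i,j} E[X_i X_j]
  have hS2 : σ ^ 2 = ∑ i ∈ J, ∑ j ∈ J, ∫ ω, X i ω * X j ω := by
    have hfeq : (fun ω => ∑ i ∈ J, X i ω) = ∑ i ∈ J, X i := by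
      funext ω; simp [Finset.sum_apply]
    rw [hσdef, hfeq, variance_eq_sub (memLp_finset_sum' J hL2), ← hfeq]
    have hmean0 : (∫ ω, ∑ i ∈ J, X i ω) = 0 := by
      rw [integral_finset_sum _ fun i hi => hXint i hi]
      exact Finset.sum_eq_zero hmean
    have hsqeq : ((fun ω => ∑ i ∈ J, X i ω) ^ 2) = fun ω => ∑ i ∈ J, ∑ j ∈ J, X i ω * X j ω := by
      funext ω
      simp only [Pi.pow_apply]
      rw [sq, Finset.sum_mul_sum]
    rw [hsqeq, hmean0]
    rw [integral_finset_sum _ fun i hi => integrable_finset_sum _ fun j hj => hmulint i hi j hj]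
    norm_num
    refine Finset.sum_congr rfl fun i hi => ?_
    rw [integral_finset_sum _ fun j hj => hmulint i hi j hj]
  have hS3 : σ ^ 2 = ∑ i ∈ J, ∑ j ∈ A i, ∫ ω, X i ω * X j ω := by
    rw [hS2]
    refine Finset.sum_congr rfl fun i hi => ?_
    rw [← Finset.sum_sdiff (hAJ i hi)]
    have hz : (∑ j ∈ J \ A i, ∫ ω, X i ω * X j ω) = 0 :=
      Finset.sum_eq_zero fun j hj => by
        have hjm := Finset.mem_sdiff.1 hj
        exact hfarX i hi j hjm.1 hjm.2
    rw [hz, zero_add]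
  -- expansion of σbar2
  have hbar : σbar2 = ∑ i ∈ J, ∑ j ∈ A i, ∫ ω, Xb i ω * Xb j ω := by
    rw [hσbar2]
    refine Finset.sum_congr rfl fun i hi => ?_
    have h1 : (∫ ω, Xb i ω * Yb i ω) = ∫ ω, ∑ j ∈ A i, Xb i ω * Xb j ω := by
      congr 1
      funext ω
      rw [hYb i]
      exact Finset.mul_sum _ _ _
    rw [h1, integral_finset_sum _ fun j hj => hXbmulint i j]
  -- the key difference bound
  set Esum : ℝ := ∑ i ∈ J, E i with hEsumdef
  have hEsumnn : 0 ≤ Esum := Finset.sum_nonneg fun i _ => hEnonneg i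
  have hqsum : (∑ i ∈ J, |q i|) ≤ κ / σ * Esum := by
    rw [hEsumdef, Finset.mul_sum]
    exact Finset.sum_le_sum fun i hi => hq i hi
  have hqsumnn : (0:ℝ) ≤ ∑ i ∈ J, |q i| := Finset.sum_nonneg fun i _ => abs_nonneg _
  have hmain : |σ ^ 2 - σbar2| ≤ 2 * (κ * Esum) + (κ / σ * Esum) ^ 2 := by
    rw [hS3, hbar, ← Finset.sum_sub_distrib]
    have step1 : |∑ i ∈ J, ((∑ j ∈ A i, ∫ ω, X i ω * X j ω) - ∑ j ∈ A i, ∫ ω, Xb i ω * Xb j ω)|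
        ≤ ∑ i ∈ J, ∑ j ∈ A i,
            ((if i ∈ A j then E i + E j else 0) + |q i| * |q j|) := by
      refine le_trans (Finset.abs_sum_le_sum_abs _ _) (Finset.sum_le_sum fun i hi => ?_)
      rw [← Finset.sum_sub_distrib]
      refine le_trans (Finset.abs_sum_le_sum_abs _ _) (Finset.sum_le_sum fun j hj => ?_)
      have hjJ : j ∈ J := hAJ i hi hj
      by_cases hij : i ∈ A j
      · rw [if_pos hij]
        exact le_trans (hpair i hi j hjJ)
          (le_add_of_nonneg_right (mul_nonneg (abs_nonneg _) (abs_nonneg _)))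
      · have hc : (∫ ω, X i ω * X j ω) = ∫ ω, X j ω * X i ω := by simp [mul_comm]
        have hcb : (∫ ω, Xb i ω * Xb j ω) = ∫ ω, Xb j ω * Xb i ω := by simp [mul_comm]
        rw [if_neg hij, zero_add, hc, hcb, hfarX j hjJ i hi hij, hfarXb j hjJ i hi hij,
          zero_sub, abs_neg, abs_mul]
        exact le_of_eq (mul_comm _ _)
    refine le_trans step1 ?_
    have hsplit : (∑ i ∈ J, ∑ j ∈ A i,
        ((if i ∈ A j then E i + E j else 0) + |q i| * |q j|))
        = (∑ i ∈ J, ∑ j ∈ A i, (if i ∈ A j then E i + E j else 0))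
          + ∑ i ∈ J, ∑ j ∈ A i, |q i| * |q j| := by
      rw [← Finset.sum_add_distrib]
      exact Finset.sum_congr rfl fun i hi => by rw [← Finset.sum_add_distrib]
    rw [hsplit]
    have hT2 : (∑ i ∈ J, ∑ j ∈ A i, |q i| * |q j|) ≤ (κ / σ * Esum) ^ 2 := by
      have h1 : (∑ i ∈ J, ∑ j ∈ A i, |q i| * |q j|)
          ≤ ∑ i ∈ J, ∑ j ∈ J, |q i| * |q j| := by
        refine Finset.sum_le_sum fun i hi => ?_
        exact Finset.sum_le_sum_of_subset_of_nonneg (hAJ i hi)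
          (fun j _ _ => mul_nonneg (abs_nonneg _) (abs_nonneg _))
      have h2 : (∑ i ∈ J, ∑ j ∈ J, |q i| * |q j|)
          = (∑ i ∈ J, |q i|) * ∑ j ∈ J, |q j| := (Finset.sum_mul_sum _ _ _ _).symm
      calc (∑ i ∈ J, ∑ j ∈ A i, |q i| * |q j|) ≤ (∑ i ∈ J, |q i|) * ∑ j ∈ J, |q j| :=
            h1.trans (le_of_eq h2)
        _ ≤ (κ / σ * Esum) * (κ / σ * Esum) :=
            mul_le_mul hqsum hqsum hqsumnn (le_trans hqsumnn hqsum)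
        _ = (κ / σ * Esum) ^ 2 := (sq (κ / σ * Esum)).symm
    have hT1 : (∑ i ∈ J, ∑ j ∈ A i, (if i ∈ A j then E i + E j else 0))
        ≤ κ * Esum + κ * Esum := by
      have hstep : (∑ i ∈ J, ∑ j ∈ A i, (if i ∈ A j then E i + E j else 0))
          ≤ ∑ i ∈ J, ∑ j ∈ J,
              ((if i ∈ B j then E i else 0) + (if j ∈ B i then E j else 0)) := by
        refine Finset.sum_le_sum fun i hi => ?_
        have hterm : ∀ j ∈ A i, (if i ∈ A j then E i + E j else 0)
            ≤ (if i ∈ B j then E i else 0) + (if j ∈ B i then E j else 0) := by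
          intro j hj
          have hjJ : j ∈ J := hAJ i hi hj
          by_cases hij : i ∈ A j
          · rw [if_pos hij, if_pos (hAB j hjJ hij), if_pos (hAB i hi hj)]
          · rw [if_neg hij]
            have h1 : (0:ℝ) ≤ if i ∈ B j then E i else 0 := by
              split_ifs; exacts [hEnonneg i, le_refl 0]
            have h2 : (0:ℝ) ≤ if j ∈ B i then E j else 0 := by
              split_ifs; exacts [hEnonneg j, le_refl 0]
            linarith
        refine le_trans (Finset.sum_le_sum hterm) ?_
        refine Finset.sum_le_sum_of_subset_of_nonneg (hAJ i hi) fun j hjJ _ => ?_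
        have h1 : (0:ℝ) ≤ if i ∈ B j then E i else 0 := by
          split_ifs; exacts [hEnonneg i, le_refl 0]
        have h2 : (0:ℝ) ≤ if j ∈ B i then E j else 0 := by
          split_ifs; exacts [hEnonneg j, le_refl 0]
        linarith
      refine hstep.trans ?_
      have hsplit2 : (∑ i ∈ J, ∑ j ∈ J,
          ((if i ∈ B j then E i else 0) + (if j ∈ B i then E j else 0)))
          = (∑ i ∈ J, ∑ j ∈ J, (if i ∈ B j then E i else 0))
            + ∑ i ∈ J, ∑ j ∈ J, (if j ∈ B i then E j else 0) := by
        rw [← Finset.sum_add_distrib]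
        exact Finset.sum_congr rfl fun i hi => by rw [← Finset.sum_add_distrib]
      rw [hsplit2]
      have hcount : ∀ (c : ℝ), 0 ≤ c → ∀ i ∈ J,
          (∑ j ∈ J, (if i ∈ B j then c else 0)) ≤ κ * c := by
        intro c hc i hi
        rw [← Finset.sum_filter]
        rw [Finset.sum_const, nsmul_eq_mul]
        exact mul_le_mul_of_nonneg_right (hκcard i hi) hc
      have hA1 : (∑ i ∈ J, ∑ j ∈ J, (if i ∈ B j then E i else 0)) ≤ κ * Esum := by
        rw [hEsumdef, Finset.mul_sum]
        exact Finset.sum_le_sum fun i hi => hcount (E i) (hEnonneg i) i hi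
      have hA2 : (∑ i ∈ J, ∑ j ∈ J, (if j ∈ B i then E j else 0)) ≤ κ * Esum := by
        rw [Finset.sum_comm, hEsumdef, Finset.mul_sum]
        exact Finset.sum_le_sum fun j hj => hcount (E j) (hEnonneg j) j hj
      linarith
    linarith
  -- conversion of Esum to β₂ σ²
  have hβ₂nn : 0 ≤ β₂ := by
    rw [hβ₂]
    exact mul_nonneg (sq_nonneg _) hEsumnn
  have hEs : Esum = β₂ * σ ^ 2 := by
    rw [hβ₂]
    field_simp
  have hx2 : κ * β₂ ≤ 1 / 150 := by
    have h1 : κ * β₂ ≤ κ * (1 / (150 * κ)) := mul_le_mul_of_nonneg_left hβ₂small hκ0.le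
    have h2 : κ * (1 / (150 * κ)) = 1 / 150 := by field_simp
    linarith
  have hy0 : 0 ≤ κ * β₂ := mul_nonneg hκ0.le hβ₂nn
  have numer : ∀ y s : ℝ, 0 ≤ y → y ≤ 1 / 150 → 0 ≤ s →
      2 * (y * s) + y ^ 2 * s ≤ 0.02 * s := by
    intro y s hy hyle hs
    nlinarith [mul_nonneg (mul_nonneg hy (sub_nonneg.2 hyle)) hs,
      mul_le_mul_of_nonneg_right hyle hs]
  have e1 : κ * Esum = κ * β₂ * σ ^ 2 := by rw [hEs]; ring
  have e2 : (κ / σ * Esum) ^ 2 = (κ * β₂) ^ 2 * σ ^ 2 := by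
    rw [hEs]
    field_simp
  have hfinal : |σ ^ 2 - σbar2| ≤ 0.02 * σ ^ 2 := by
    refine hmain.trans ?_
    rw [e1, e2]
    exact numer (κ * β₂) (σ ^ 2) hy0 hx2 (sq_nonneg σ)
  have h := abs_le.1 hfinal
  constructor <;> nlinarith [h.1, h.2]
end

section
/- Under (LD1) and (LD2), P(|∑_{i∈J}(X̄_i Ȳ_i − E[X̄_i Ȳ_i])| ≥ σ²/2) ≤ 4·κ²·β₃. -/
open MeasureTheory ProbabilityTheory

private lemma amgm3 {a b c : ℝ} (ha : 0 ≤ a) (hb : 0 ≤ b) (hc : 0 ≤ c) :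
    a * b * c ≤ (a ^ 3 + b ^ 3 + c ^ 3) / 3 := by
  nlinarith [mul_nonneg (add_nonneg (add_nonneg ha hb) hc)
    (add_nonneg (add_nonneg (sq_nonneg (a - b)) (sq_nonneg (b - c))) (sq_nonneg (c - a)))]

private lemma Indep_mono_aux {Ω : Type*} {m₁ m₂ m₁' m₂' mΩ : MeasurableSpace Ω}
    {μ : @MeasureTheory.Measure Ω mΩ}
    (h : @Indep Ω m₁ m₂ mΩ μ) (h1 : m₁' ≤ m₁) (h2 : m₂' ≤ m₂) : @Indep Ω m₁' m₂' mΩ μ := by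
  rw [Indep_iff] at h ⊢
  exact fun t1 t2 ht1 ht2 => h t1 t2 (h1 t1 ht1) (h2 t2 ht2)

/-- Under (LD1) and (LD2):
`P(|∑ᵢ(X̄ᵢȲᵢ − E[X̄ᵢȲᵢ])| ≥ σ²/2) ≤ 4·κ²·β₃`. -/
theorem truncated_quadratic_form_concentration
    {Ω : Type*} [MeasureSpace Ω] [IsProbabilityMeasure (ℙ : Measure Ω)]
    {ι : Type*} [DecidableEq ι] (J : Finset ι) (X : ι → Ω → ℝ)
    (A B : ι → Finset ι)
    (hmeas : ∀ i, Measurable (X i))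
    (hL2 : ∀ i ∈ J, MemLp (X i) 2 ℙ)
    (hmean : ∀ i ∈ J, (∫ ω, X i ω) = 0)
    (hiA : ∀ i ∈ J, i ∈ A i) (hAJ : ∀ i ∈ J, A i ⊆ J) (hAB : ∀ i ∈ J, A i ⊆ B i)
    -- (LD1): `X i` is independent of `{X j : j ∉ A i}`
    (hLD1 : ∀ i ∈ J, Indep (MeasurableSpace.comap (X i) inferInstance)
      (⨆ j ∈ J \ A i, MeasurableSpace.comap (X j) inferInstance) ℙ)
    (hBJ : ∀ i ∈ J, B i ⊆ J)
    -- (LD2): `{X j : j ∈ A i}` is independent of `{X j : j ∉ B i}`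
    (hLD2 : ∀ i ∈ J, Indep (⨆ j ∈ A i, MeasurableSpace.comap (X j) inferInstance)
      (⨆ j ∈ J \ B i, MeasurableSpace.comap (X j) inferInstance) ℙ)
    (σ κ : ℝ) (hσ : 0 < σ) (hκ : 1 ≤ κ)
    (hσdef : σ ^ 2 = variance (fun ω => ∑ i ∈ J, X i ω) ℙ)
    (hκcard : ∀ i ∈ J, ((J.filter fun j => i ∈ B j).card : ℝ) ≤ κ)
    (hκcard' : ∀ i ∈ J, ((J.filter fun j => (B i ∩ A j).Nonempty).card : ℝ) ≤ κ)
    -- truncated variables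
    (Xb : ι → Ω → ℝ) (hXb : ∀ i, Xb i = fun ω => if |X i ω| ≤ σ / κ then X i ω else 0)
    (Yb : ι → Ω → ℝ) (hYb : ∀ i, Yb i = fun ω => ∑ j ∈ A i, Xb j ω)
    (β₃ : ℝ)
    (hβ₃ : β₃ = σ⁻¹ ^ 3 * ∑ i ∈ J, ∫ ω, (if |X i ω| ≤ σ / κ then |X i ω| ^ 3 else 0)) :
    (ℙ {ω | σ ^ 2 / 2 ≤
        |∑ i ∈ J, (Xb i ω * Yb i ω - ∫ ω', Xb i ω' * Yb i ω')|}).toReal ≤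
      4 * κ ^ 2 * β₃ := by
  classical
  have hκpos : (0 : ℝ) < κ := lt_of_lt_of_le one_pos hκ
  set m : ℝ := σ / κ with hmdef
  have hmpos : (0 : ℝ) < m := div_pos hσ hκpos
  set ξ : ι → Ω → ℝ := fun i ω => Xb i ω * Yb i ω with hξ
  set μc : ι → ℝ := fun i => ∫ ω, ξ i ω with hμc
  set c : ι → Ω → ℝ := fun i ω => ξ i ω - μc i with hc
  set Q : ι → ℝ := fun i => ∫ ω, (ξ i ω) ^ 2 with hQ
  set M : ι → ℝ := fun i => ∫ ω, |Xb i ω| ^ 3 with hM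
  -- basic measurability and bounds
  have hXbmeas : ∀ i, Measurable (Xb i) := by
    intro i; rw [hXb]
    exact Measurable.ite (measurableSet_le (hmeas i).abs measurable_const)
      (hmeas i) measurable_const
  have hXbbd : ∀ i ω, |Xb i ω| ≤ m := by
    intro i ω; rw [hXb]; dsimp only; split
    · assumption
    · simpa using hmpos.le
  have hYbmeas : ∀ i, Measurable (Yb i) := by
    intro i; rw [hYb]; exact Finset.measurable_sum _ fun j _ => hXbmeas j
  have hAcard : ∀ i ∈ J, ((A i).card : ℝ) ≤ κ := by
    intro i hi
    refine le_trans ?_ (hκcard' i hi)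
    have hsub : A i ⊆ J.filter fun j => (B i ∩ A j).Nonempty := by
      intro j hj
      exact Finset.mem_filter.2 ⟨hAJ i hi hj,
        ⟨j, Finset.mem_inter.2 ⟨hAB i hi hj, hiA j (hAJ i hi hj)⟩⟩⟩
    exact_mod_cast Finset.card_le_card hsub
  have hYbbd : ∀ i ∈ J, ∀ ω, |Yb i ω| ≤ σ := by
    intro i hi ω
    rw [hYb]
    calc |∑ j ∈ A i, Xb j ω| ≤ ∑ j ∈ A i, |Xb j ω| := Finset.abs_sum_le_sum_abs _ _
      _ ≤ ∑ _j ∈ A i, m := Finset.sum_le_sum fun j _ => hXbbd j ω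
      _ = ((A i).card : ℝ) * m := by rw [Finset.sum_const, nsmul_eq_mul]
      _ ≤ κ * m := by
          exact mul_le_mul_of_nonneg_right (hAcard i hi) hmpos.le
      _ = σ := by rw [hmdef]; field_simp
  have hξmeas : ∀ i, Measurable (ξ i) := fun i => (hXbmeas i).mul (hYbmeas i)
  have hξbd : ∀ i ∈ J, ∀ ω, |ξ i ω| ≤ m * σ := by
    intro i hi ω
    rw [hξ]; dsimp only
    rw [abs_mul]
    exact mul_le_mul (hXbbd i ω) (hYbbd i hi ω) (abs_nonneg _) hmpos.le
  have int_of_bdd : ∀ {f : Ω → ℝ} (C : ℝ), Measurable f → (∀ ω, |f ω| ≤ C) →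
      Integrable f ℙ := by
    intro f C hf hC
    exact (memLp_top_of_bound hf.aestronglyMeasurable C
      (Filter.Eventually.of_forall (by simpa [Real.norm_eq_abs] using hC))).integrable le_top
  have int_ξ : ∀ i ∈ J, Integrable (ξ i) ℙ :=
    fun i hi => int_of_bdd (m * σ) (hξmeas i) (hξbd i hi)
  have hμcbd : ∀ i ∈ J, |μc i| ≤ m * σ := by
    intro i hi
    rw [hμc]
    calc |∫ ω, ξ i ω| ≤ ∫ ω, |ξ i ω| := by
          simpa [Real.norm_eq_abs] using norm_integral_le_integral_norm (μ := ℙ) (ξ i)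
      _ ≤ ∫ _ω, m * σ := integral_mono (int_ξ i hi).abs (integrable_const _)
          fun ω => hξbd i hi ω
      _ = m * σ := by simp
  have hcmeas : ∀ i, Measurable (c i) := fun i => (hξmeas i).sub measurable_const
  have hcbd : ∀ i ∈ J, ∀ ω, |c i ω| ≤ 2 * (m * σ) := by
    intro i hi ω
    rw [hc]; dsimp only
    calc |ξ i ω - μc i| ≤ |ξ i ω| + |μc i| := abs_sub _ _
      _ ≤ m * σ + m * σ := add_le_add (hξbd i hi ω) (hμcbd i hi)
      _ = 2 * (m * σ) := by ring
  have int_cc : ∀ i ∈ J, ∀ j ∈ J, Integrable (fun ω => c i ω * c j ω) ℙ := by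
    intro i hi j hj
    refine int_of_bdd (2 * (m * σ) * (2 * (m * σ))) ((hcmeas i).mul (hcmeas j)) fun ω => ?_
    rw [abs_mul]
    exact mul_le_mul (hcbd i hi ω) (hcbd j hj ω) (abs_nonneg _)
      (by positivity)
  have hξ2 : ∀ i ∈ J, MemLp (ξ i) 2 ℙ := by
    intro i hi
    exact (memLp_top_of_bound (hξmeas i).aestronglyMeasurable (m * σ)
      (Filter.Eventually.of_forall (by simpa [Real.norm_eq_abs] using hξbd i hi))).mono_exponent le_top
  have hT2 : MemLp (fun ω => ∑ i ∈ J, ξ i ω) 2 ℙ := memLp_finset_sum J hξ2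
  have hTμ : (∫ ω, ∑ i ∈ J, ξ i ω) = ∑ i ∈ J, μc i :=
    integral_finset_sum J fun i hi => int_ξ i hi
  -- step 1 : rewrite goal set
  have hsetEq : {ω | σ ^ 2 / 2 ≤
        |∑ i ∈ J, (Xb i ω * Yb i ω - ∫ ω', Xb i ω' * Yb i ω')|}
      = {ω | σ ^ 2 / 2 ≤
          |(fun ω => ∑ i ∈ J, ξ i ω) ω - ∫ x, (fun ω => ∑ i ∈ J, ξ i ω) x|} := by
    ext ω
    simp only [Set.mem_setOf_eq, hTμ, Finset.sum_sub_distrib]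
    exact Iff.rfl
  -- step 2 : covariance formula and vanishing
  have int_ξξ : ∀ i ∈ J, ∀ j ∈ J, Integrable (fun ω => ξ i ω * ξ j ω) ℙ := by
    intro i hi j hj
    refine int_of_bdd ((m * σ) * (m * σ)) ((hξmeas i).mul (hξmeas j)) fun ω => ?_
    rw [abs_mul]
    exact mul_le_mul (hξbd i hi ω) (hξbd j hj ω) (abs_nonneg _) (by positivity)
  have covEq : ∀ i ∈ J, ∀ j ∈ J,
      (∫ ω, c i ω * c j ω) = (∫ ω, ξ i ω * ξ j ω) - μc i * μc j := by
    intro i hi j hj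
    have intg : Integrable (fun ω => μc i * ξ j ω + μc j * ξ i ω - μc i * μc j) ℙ :=
      (((int_ξ j hj).const_mul (μc i)).add ((int_ξ i hi).const_mul (μc j))).sub
        (integrable_const _)
    have hfun : (fun ω => c i ω * c j ω)
        = fun ω => ξ i ω * ξ j ω - (μc i * ξ j ω + μc j * ξ i ω - μc i * μc j) := by
      funext ω; rw [hc]; dsimp only; ring
    have intg2 : Integrable (fun ω => μc i * ξ j ω) ℙ := (int_ξ j hj).const_mul _
    have intg3 : Integrable (fun ω => μc j * ξ i ω) ℙ := (int_ξ i hi).const_mul _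
    have intg1 : Integrable (fun ω => μc i * ξ j ω + μc j * ξ i ω) ℙ := intg2.add intg3
    rw [hfun, integral_sub (int_ξξ i hi j hj) intg,
      integral_sub intg1 (integrable_const _),
      integral_add intg2 intg3,
      integral_const_mul, integral_const_mul, integral_const]
    simp only [measure_univ, ENNReal.toReal_one, smul_eq_mul, one_mul, probReal_univ, mul_one]
    rw [hμc]
    ring
  have measXb : ∀ (S : Finset ι), ∀ k ∈ S,
      @Measurable Ω ℝ (⨆ l ∈ S, MeasurableSpace.comap (X l) inferInstance) _ (Xb k) := by
    intro S k hk
    have h1 : @Measurable Ω ℝ (MeasurableSpace.comap (X k) inferInstance) _ (X k) :=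
      Measurable.of_comap_le le_rfl
    have h2 : MeasurableSpace.comap (X k) inferInstance
        ≤ ⨆ l ∈ S, MeasurableSpace.comap (X l) inferInstance :=
      le_iSup₂ (f := fun l (_ : l ∈ S) => MeasurableSpace.comap (X l) inferInstance) k hk
    have hφ : Measurable fun x : ℝ => if |x| ≤ m then x else 0 :=
      Measurable.ite (measurableSet_le measurable_abs measurable_const)
        measurable_id measurable_const
    have heq : Xb k = (fun x : ℝ => if |x| ≤ m then x else 0) ∘ X k := by
      rw [hXb]; rfl
    rw [heq]
    exact hφ.comp (h1.mono h2 le_rfl)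
  have measξS : ∀ k ∈ J,
      @Measurable Ω ℝ (⨆ l ∈ A k, MeasurableSpace.comap (X l) inferInstance) _ (ξ k) := by
    intro k hk
    have h1 := measXb (A k) k (hiA k hk)
    have h2 : @Measurable Ω ℝ (⨆ l ∈ A k, MeasurableSpace.comap (X l) inferInstance) _ (Yb k) := by
      rw [hYb]
      exact Finset.measurable_sum _ fun l hl => measXb (A k) l hl
    rw [hξ]
    exact h1.mul h2
  have covZero : ∀ i ∈ J, ∀ j ∈ J, ¬ (B i ∩ A j).Nonempty →
      (∫ ω, c i ω * c j ω) = 0 := by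
    intro i hi j hj hnon
    have hIF : IndepFun (ξ i) (ξ j) ℙ := by
      rw [IndepFun_iff_Indep]
      refine Indep_mono_aux (hLD2 i hi) ?_ ?_
      · exact (measξS i hi).comap_le
      · refine le_trans (measξS j hj).comap_le (biSup_mono ?_)
        intro k hk
        exact Finset.mem_sdiff.2
          ⟨hAJ j hj hk, fun hkB => hnon ⟨k, Finset.mem_inter.2 ⟨hkB, hk⟩⟩⟩
    have hmul : (∫ ω, ξ i ω * ξ j ω) = μc i * μc j := by
      have h := hIF.integral_mul_eq_mul_integral (int_ξ i hi).aestronglyMeasurable (int_ξ j hj).aestronglyMeasurable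
      simpa [hμc, Pi.mul_apply] using h
    rw [covEq i hi j hj, hmul, sub_self]
  have int_c2 : ∀ i ∈ J, Integrable (fun ω => c i ω ^ 2) ℙ := by
    intro i hi
    refine int_of_bdd ((2 * (m * σ)) ^ 2) ((hcmeas i).pow_const 2) fun ω => ?_
    rw [abs_pow]
    exact pow_le_pow_left₀ (abs_nonneg _) (hcbd i hi ω) 2
  have hc2Q : ∀ i ∈ J, (∫ ω, c i ω ^ 2) ≤ Q i := by
    intro i hi
    have hveq : variance (ξ i) ℙ = ∫ ω, c i ω ^ 2 := by
      rw [variance_eq_integral (hξ2 i hi).aestronglyMeasurable.aemeasurable]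
    have hle := variance_le_expectation_sq (X := ξ i) (hξ2 i hi).aestronglyMeasurable
    rw [hveq] at hle
    refine le_trans hle ?_
    rw [hQ]
    simp only [Pi.pow_apply]
    exact le_refl _
  have covBd : ∀ i ∈ J, ∀ j ∈ J,
      (∫ ω, c i ω * c j ω) ≤ (Q i + Q j) / 2 := by
    intro i hi j hj
    calc (∫ ω, c i ω * c j ω) ≤ ∫ ω, (c i ω ^ 2 + c j ω ^ 2) / 2 := by
          refine integral_mono (int_cc i hi j hj) (((int_c2 i hi).add (int_c2 j hj)).div_const 2)
            fun ω => ?_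
          have h : ∀ x y : ℝ, x * y ≤ (x ^ 2 + y ^ 2) / 2 := fun x y => by
            nlinarith [sq_nonneg (x - y)]
          exact h _ _
      _ = ((∫ ω, c i ω ^ 2) + ∫ ω, c j ω ^ 2) / 2 := by
          rw [integral_div, integral_add (int_c2 i hi) (int_c2 j hj)]
      _ ≤ (Q i + Q j) / 2 := by
          have := hc2Q i hi; have := hc2Q j hj; linarith
  have hQnonneg : ∀ i, 0 ≤ Q i := fun i => integral_nonneg fun ω => sq_nonneg _
  have hMnonneg : ∀ i, 0 ≤ M i := fun i => integral_nonneg fun ω => by positivity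
  -- step 3 : variance expansion
  have hVar : variance (fun ω => ∑ i ∈ J, ξ i ω) ℙ
      = ∑ i ∈ J, ∑ j ∈ J, ∫ ω, c i ω * c j ω := by
    rw [variance_eq_integral hT2.aestronglyMeasurable.aemeasurable]
    change ∫ ω, ((((fun ω => ∑ i ∈ J, ξ i ω) - fun _ => ∫ x, ∑ i ∈ J, ξ i x) ^ (2 : ℕ) : Ω → ℝ)) ω ∂ℙ = _
    have hrew : (((fun ω => ∑ i ∈ J, ξ i ω) - fun _ => ∫ x, ∑ i ∈ J, ξ i x) ^ (2 : ℕ))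
        = fun ω => ∑ i ∈ J, ∑ j ∈ J, c i ω * c j ω := by
      funext ω
      simp only [Pi.pow_apply, Pi.sub_apply, hTμ, ← Finset.sum_sub_distrib]
      rw [sq, Finset.sum_mul_sum]
    rw [hrew, integral_finset_sum J fun i hi =>
      integrable_finset_sum J fun j hj => int_cc i hi j hj]
    exact Finset.sum_congr rfl fun i hi =>
      integral_finset_sum J fun j hj => int_cc i hi j hj
  -- step 4 : sum of covariances bound
  have key : ∑ i ∈ J, ∑ j ∈ J, (∫ ω, c i ω * c j ω) ≤ κ * ∑ i ∈ J, Q i := by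
    have pair : ∀ i ∈ J, ∀ j ∈ J, (∫ ω, c i ω * c j ω) ≤
        ((if (B i ∩ A j).Nonempty then Q i else 0)
          + (if (B j ∩ A i).Nonempty then Q j else 0)) / 2 := by
      intro i hi j hj
      have hQi0 : (0:ℝ) ≤ if (B i ∩ A j).Nonempty then Q i else 0 := by
        split
        · exact hQnonneg i
        · exact le_rfl
      have hQj0 : (0:ℝ) ≤ if (B j ∩ A i).Nonempty then Q j else 0 := by
        split
        · exact hQnonneg j
        · exact le_rfl
      by_cases h1 : (B i ∩ A j).Nonempty
      · by_cases h2 : (B j ∩ A i).Nonempty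
        · simpa [h1, h2] using covBd i hi j hj
        · have hz : (∫ ω, c i ω * c j ω) = 0 := by
            rw [show (fun ω => c i ω * c j ω) = fun ω => c j ω * c i ω from
              funext fun ω => mul_comm _ _]
            exact covZero j hj i hi h2
          rw [hz]
          positivity
      · rw [covZero i hi j hj h1]
        positivity
    have part1 : ∑ i ∈ J, ∑ j ∈ J, (if (B i ∩ A j).Nonempty then Q i else 0)
        ≤ κ * ∑ i ∈ J, Q i := by
      rw [Finset.mul_sum]
      refine Finset.sum_le_sum fun i hi => ?_
      rw [← Finset.sum_filter, Finset.sum_const, nsmul_eq_mul]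
      exact mul_le_mul_of_nonneg_right (hκcard' i hi) (hQnonneg i)
    have part2 : ∑ i ∈ J, ∑ j ∈ J, (if (B j ∩ A i).Nonempty then Q j else 0)
        ≤ κ * ∑ j ∈ J, Q j := by
      rw [Finset.sum_comm, Finset.mul_sum]
      refine Finset.sum_le_sum fun j hj => ?_
      rw [← Finset.sum_filter, Finset.sum_const, nsmul_eq_mul]
      exact mul_le_mul_of_nonneg_right (hκcard' j hj) (hQnonneg j)
    calc ∑ i ∈ J, ∑ j ∈ J, (∫ ω, c i ω * c j ω)
        ≤ ∑ i ∈ J, ∑ j ∈ J, ((if (B i ∩ A j).Nonempty then Q i else 0)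
            + (if (B j ∩ A i).Nonempty then Q j else 0)) / 2 :=
          Finset.sum_le_sum fun i hi => Finset.sum_le_sum fun j hj => pair i hi j hj
      _ = ((∑ i ∈ J, ∑ j ∈ J, (if (B i ∩ A j).Nonempty then Q i else 0))
            + ∑ i ∈ J, ∑ j ∈ J, (if (B j ∩ A i).Nonempty then Q j else 0)) / 2 := by
          symm
          rw [← Finset.sum_add_distrib, Finset.sum_div]
          refine Finset.sum_congr rfl fun i _ => ?_
          rw [← Finset.sum_add_distrib, Finset.sum_div]
      _ ≤ (κ * ∑ i ∈ J, Q i + κ * ∑ i ∈ J, Q i) / 2 := by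
          have := part1; have := part2; linarith
      _ = κ * ∑ i ∈ J, Q i := by ring
  -- step 5 : second moment bound
  have int_abs3 : ∀ k, Integrable (fun ω => |Xb k ω| ^ 3) ℙ := by
    intro k
    refine int_of_bdd (m ^ 3) ((hXbmeas k).abs.pow_const 3) fun ω => ?_
    rw [abs_pow, abs_abs]
    exact pow_le_pow_left₀ (abs_nonneg _) (hXbbd k ω) 3
  have ptw : ∀ i ∈ J, ∀ ω, (ξ i ω) ^ 2 ≤ ∑ k ∈ A i, ∑ l ∈ A i,
      (m / 3) * (|Xb i ω| ^ 3 + |Xb k ω| ^ 3 + |Xb l ω| ^ 3) := by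
    intro i hi ω
    have hexp : (ξ i ω) ^ 2
        = ∑ k ∈ A i, ∑ l ∈ A i, Xb i ω ^ 2 * (Xb k ω * Xb l ω) := by
      rw [hξ]; dsimp only
      rw [hYb]; dsimp only
      rw [mul_pow, sq (∑ j ∈ A i, Xb j ω), Finset.sum_mul_sum, Finset.mul_sum]
      exact Finset.sum_congr rfl fun k _ => by rw [Finset.mul_sum]
    rw [hexp]
    refine Finset.sum_le_sum fun k _ => Finset.sum_le_sum fun l _ => ?_
    have habs : Xb i ω ^ 2 * (Xb k ω * Xb l ω)
        ≤ |Xb i ω| ^ 2 * (|Xb k ω| * |Xb l ω|) := by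
      have h1 : Xb i ω ^ 2 * (Xb k ω * Xb l ω)
          ≤ |Xb i ω ^ 2 * (Xb k ω * Xb l ω)| := le_abs_self _
      simpa [abs_mul, abs_pow] using h1
    have hstep : |Xb i ω| ^ 2 * (|Xb k ω| * |Xb l ω|)
        ≤ m * (|Xb i ω| * (|Xb k ω| * |Xb l ω|)) := by
      have h2 : |Xb i ω| ^ 2 ≤ m * |Xb i ω| := by
        rw [sq]
        exact mul_le_mul_of_nonneg_right (hXbbd i ω) (abs_nonneg _)
      refine le_trans (mul_le_mul_of_nonneg_right h2 (by positivity)) ?_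
      rw [mul_assoc]
    have hamgm : m * (|Xb i ω| * (|Xb k ω| * |Xb l ω|))
        ≤ (m / 3) * (|Xb i ω| ^ 3 + |Xb k ω| ^ 3 + |Xb l ω| ^ 3) := by
      have h3 := amgm3 (abs_nonneg (Xb i ω)) (abs_nonneg (Xb k ω)) (abs_nonneg (Xb l ω))
      calc m * (|Xb i ω| * (|Xb k ω| * |Xb l ω|))
          = m * (|Xb i ω| * |Xb k ω| * |Xb l ω|) := by ring
        _ ≤ m * ((|Xb i ω| ^ 3 + |Xb k ω| ^ 3 + |Xb l ω| ^ 3) / 3) :=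
            mul_le_mul_of_nonneg_left h3 hmpos.le
        _ = (m / 3) * (|Xb i ω| ^ 3 + |Xb k ω| ^ 3 + |Xb l ω| ^ 3) := by ring
    exact le_trans habs (le_trans hstep hamgm)
  have hQbd : ∀ i ∈ J, Q i ≤ (m / 3) * ∑ k ∈ A i, ∑ l ∈ A i, (M i + M k + M l) := by
    intro i hi
    have int_term : ∀ k l : ι, Integrable
        (fun ω => (m / 3) * (|Xb i ω| ^ 3 + |Xb k ω| ^ 3 + |Xb l ω| ^ 3)) ℙ :=
      fun k l => ((((int_abs3 i).add (int_abs3 k)).add (int_abs3 l)).const_mul _)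
    have hint : Integrable (fun ω => ∑ k ∈ A i, ∑ l ∈ A i,
        (m / 3) * (|Xb i ω| ^ 3 + |Xb k ω| ^ 3 + |Xb l ω| ^ 3)) ℙ :=
      integrable_finset_sum _ fun k _ => integrable_finset_sum _ fun l _ => int_term k l
    have int_ξsq : Integrable (fun ω => (ξ i ω) ^ 2) ℙ := by
      refine int_of_bdd ((m * σ) ^ 2) ((hξmeas i).pow_const 2) fun ω => ?_
      rw [abs_pow]
      exact pow_le_pow_left₀ (abs_nonneg _) (hξbd i hi ω) 2
    calc Q i ≤ ∫ ω, ∑ k ∈ A i, ∑ l ∈ A i,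
          (m / 3) * (|Xb i ω| ^ 3 + |Xb k ω| ^ 3 + |Xb l ω| ^ 3) := by
          rw [hQ]
          exact integral_mono int_ξsq hint (ptw i hi)
      _ = ∑ k ∈ A i, ∑ l ∈ A i, (m / 3) * (M i + M k + M l) := by
          rw [integral_finset_sum _ fun k _ =>
            integrable_finset_sum _ fun l _ => int_term k l]
          refine Finset.sum_congr rfl fun k _ => ?_
          rw [integral_finset_sum _ fun l _ => int_term k l]
          refine Finset.sum_congr rfl fun l _ => ?_
          rw [integral_const_mul]
          congr 1
          have ia : Integrable (fun ω => |Xb i ω| ^ 3 + |Xb k ω| ^ 3) ℙ :=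
            (int_abs3 i).add (int_abs3 k)
          rw [integral_add ia (int_abs3 l), integral_add (int_abs3 i) (int_abs3 k)]
      _ = (m / 3) * ∑ k ∈ A i, ∑ l ∈ A i, (M i + M k + M l) := by
          rw [Finset.mul_sum]
          exact Finset.sum_congr rfl fun k _ => by rw [Finset.mul_sum]
  have inner_eq : ∀ i, ∑ k ∈ A i, ∑ l ∈ A i, (M i + M k + M l)
      = ((A i).card : ℝ) ^ 2 * M i + 2 * ((A i).card : ℝ) * ∑ k ∈ A i, M k := by
    intro i
    calc ∑ k ∈ A i, ∑ l ∈ A i, (M i + M k + M l)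
        = ∑ k ∈ A i, (((A i).card : ℝ) * M i + ((A i).card : ℝ) * M k
            + ∑ l ∈ A i, M l) :=
          Finset.sum_congr rfl fun k _ => by
            simp only [Finset.sum_add_distrib, Finset.sum_const, nsmul_eq_mul]
      _ = ((A i).card : ℝ) ^ 2 * M i + 2 * ((A i).card : ℝ) * ∑ k ∈ A i, M k := by
          simp only [Finset.sum_add_distrib, Finset.sum_const, nsmul_eq_mul]
          rw [← Finset.mul_sum]
          ring
  have hdouble : ∑ i ∈ J, ∑ k ∈ A i, M k ≤ κ * ∑ k ∈ J, M k := by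
    have h1 : ∀ i ∈ J, ∑ k ∈ A i, M k = ∑ k ∈ J, if k ∈ A i then M k else 0 := by
      intro i hi
      rw [Finset.sum_ite_mem, Finset.inter_eq_right.2 (hAJ i hi)]
    calc ∑ i ∈ J, ∑ k ∈ A i, M k
        = ∑ i ∈ J, ∑ k ∈ J, if k ∈ A i then M k else 0 := Finset.sum_congr rfl h1
      _ = ∑ k ∈ J, ∑ i ∈ J, if k ∈ A i then M k else 0 := Finset.sum_comm
      _ ≤ ∑ k ∈ J, κ * M k := by
          refine Finset.sum_le_sum fun k hk => ?_
          rw [← Finset.sum_filter, Finset.sum_const, nsmul_eq_mul]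
          refine mul_le_mul_of_nonneg_right ?_ (hMnonneg k)
          have hsub : (J.filter fun i => k ∈ A i) ⊆ J.filter fun i => k ∈ B i := by
            intro x hx
            rw [Finset.mem_filter] at hx ⊢
            exact ⟨hx.1, hAB x hx.1 hx.2⟩
          calc ((J.filter fun i => k ∈ A i).card : ℝ)
              ≤ ((J.filter fun i => k ∈ B i).card : ℝ) := by
                exact_mod_cast Finset.card_le_card hsub
            _ ≤ κ := hκcard k hk
      _ = κ * ∑ k ∈ J, M k := by rw [Finset.mul_sum]
  have hQsum : ∑ i ∈ J, Q i ≤ σ * κ * ∑ i ∈ J, M i := by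
    have hMsum0 : 0 ≤ ∑ k ∈ J, M k := Finset.sum_nonneg fun k _ => hMnonneg k
    calc ∑ i ∈ J, Q i
        ≤ ∑ i ∈ J, (m / 3) * (((A i).card : ℝ) ^ 2 * M i
            + 2 * ((A i).card : ℝ) * ∑ k ∈ A i, M k) := by
          refine Finset.sum_le_sum fun i hi => ?_
          rw [← inner_eq i]
          exact hQbd i hi
      _ ≤ ∑ i ∈ J, (m / 3) * (κ ^ 2 * M i + 2 * κ * ∑ k ∈ A i, M k) := by
          refine Finset.sum_le_sum fun i hi => ?_
          refine mul_le_mul_of_nonneg_left ?_ (by positivity)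
          have h1 : ((A i).card : ℝ) ≤ κ := hAcard i hi
          have h0 : (0:ℝ) ≤ ((A i).card : ℝ) := Nat.cast_nonneg _
          have h2 : (0:ℝ) ≤ ∑ k ∈ A i, M k := Finset.sum_nonneg fun k _ => hMnonneg k
          have h3 : (0:ℝ) ≤ M i := hMnonneg i
          have hsq : ((A i).card : ℝ) ^ 2 ≤ κ ^ 2 := by nlinarith
          have p1 := mul_le_mul_of_nonneg_right hsq h3
          have p2 := mul_le_mul_of_nonneg_right h1 h2
          nlinarith [p1, p2]
      _ = (m / 3) * (κ ^ 2 * ∑ i ∈ J, M i + 2 * κ * ∑ i ∈ J, ∑ k ∈ A i, M k) := by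
          simp only [mul_add, Finset.mul_sum, ← Finset.sum_add_distrib]
      _ ≤ (m / 3) * (κ ^ 2 * ∑ i ∈ J, M i + 2 * κ * (κ * ∑ k ∈ J, M k)) := by
          refine mul_le_mul_of_nonneg_left ?_ (by positivity)
          have h4 := mul_le_mul_of_nonneg_left hdouble
            (by positivity : (0:ℝ) ≤ 2 * κ)
          linarith
      _ = σ * κ * ∑ i ∈ J, M i := by
          rw [hmdef]
          field_simp
          ring
  -- step 6 : identify β₃
  have hMi : ∀ i, M i = ∫ ω, (if |X i ω| ≤ m then |X i ω| ^ 3 else 0) := by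
    intro i
    simp only [hM]
    congr 1
    funext ω
    rw [hXb]
    dsimp only
    split <;> simp
  have hβM : ∑ i ∈ J, M i = σ ^ 3 * β₃ := by
    rw [hβ₃, show (∑ i ∈ J, ∫ ω, (if |X i ω| ≤ m then |X i ω| ^ 3 else 0))
      = ∑ i ∈ J, M i from Finset.sum_congr rfl fun i _ => (hMi i).symm]
    field_simp
  -- put everything together
  have hVarBd : variance (fun ω => ∑ i ∈ J, ξ i ω) ℙ ≤ κ ^ 2 * σ ^ 4 * β₃ := by
    rw [hVar]
    calc ∑ i ∈ J, ∑ j ∈ J, (∫ ω, c i ω * c j ω) ≤ κ * ∑ i ∈ J, Q i := key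
      _ ≤ κ * (σ * κ * ∑ i ∈ J, M i) := by
          exact mul_le_mul_of_nonneg_left hQsum hκpos.le
      _ = κ * (σ * κ * (σ ^ 3 * β₃)) := by rw [hβM]
      _ = κ ^ 2 * σ ^ 4 * β₃ := by ring
  have cheb := meas_ge_le_variance_div_sq (μ := ℙ) hT2
    (c := σ ^ 2 / 2) (by positivity)
  rw [hsetEq]
  refine le_trans (ENNReal.toReal_mono (by simp) cheb) ?_
  rw [ENNReal.toReal_ofReal (div_nonneg (variance_nonneg _ _) (by positivity))]
  rw [div_le_iff₀ (by positivity)]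
  calc variance (fun ω => ∑ i ∈ J, ξ i ω) ℙ ≤ κ ^ 2 * σ ^ 4 * β₃ := hVarBd
    _ = 4 * κ ^ 2 * β₃ * (σ ^ 2 / 2) ^ 2 := by ring
end

section
/- Under (LD1), the sum of truncated second-moment cross terms satisfies ∑_{i∈J} E[X̄_i² Ȳ_i²] ≤ κ·σ⁴·β₃, where X̄_i = X_i·1{|X_i| ≤ σ/κ}, Ȳ_i = ∑_{j∈A_i} X̄_j, β₃ = σ^{-3}·∑_{i∈J} E[|X_i|³·1{|X_i| ≤ σ/κ}]. -/
open MeasureTheory ProbabilityTheory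

lemma amgm_aux (a b : ℝ) (ha : 0 ≤ a) (hb : 0 ≤ b) :
    a ^ 2 * b ≤ 2/3 * a ^ 3 + 1/3 * b ^ 3 := by
  nlinarith [sq_nonneg (a - b), mul_nonneg (sq_nonneg (a - b)) ha,
    mul_nonneg (sq_nonneg (a - b)) hb]

/-- Under (LD1): `∑ᵢ E[X̄ᵢ²·Ȳᵢ²] ≤ κ·σ⁴·β₃`. -/
theorem truncated_cross_moment_bound
    {Ω : Type*} [MeasureSpace Ω] [IsProbabilityMeasure (ℙ : Measure Ω)]
    {ι : Type*} [DecidableEq ι] (J : Finset ι) (X : ι → Ω → ℝ)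
    (A : ι → Finset ι)
    (hmeas : ∀ i, Measurable (X i))
    (hL2 : ∀ i ∈ J, MemLp (X i) 2 ℙ)
    (hmean : ∀ i ∈ J, (∫ ω, X i ω) = 0)
    (hiA : ∀ i ∈ J, i ∈ A i) (hAJ : ∀ i ∈ J, A i ⊆ J) 
    -- (LD1): `X i` is independent of `{X j : j ∉ A i}`
    (hLD1 : ∀ i ∈ J, Indep (MeasurableSpace.comap (X i) inferInstance)
      (⨆ j ∈ J \ A i, MeasurableSpace.comap (X j) inferInstance) ℙ)
    (σ κ : ℝ) (hσ : 0 < σ) (hκ : 1 ≤ κ)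
    (hσdef : σ ^ 2 = variance (fun ω => ∑ i ∈ J, X i ω) ℙ)
    (hκA : ∀ i ∈ J, ((A i).card : ℝ) ≤ κ)
    (hκA' : ∀ i ∈ J, ((J.filter fun j => i ∈ A j).card : ℝ) ≤ κ)
    -- truncated variables
    (Xb : ι → Ω → ℝ) (hXb : ∀ i, Xb i = fun ω => if |X i ω| ≤ σ / κ then X i ω else 0)
    (Yb : ι → Ω → ℝ) (hYb : ∀ i, Yb i = fun ω => ∑ j ∈ A i, Xb j ω)
    (β₃ : ℝ)
    (hβ₃ : β₃ = σ⁻¹ ^ 3 * ∑ i ∈ J, ∫ ω, (if |X i ω| ≤ σ / κ then |X i ω| ^ 3 else 0)) :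
    (∑ i ∈ J, ∫ ω, (Xb i ω) ^ 2 * (Yb i ω) ^ 2) ≤ κ * σ ^ 4 * β₃ := by
  have hκ0 : (0:ℝ) < κ := lt_of_lt_of_le one_pos hκ
  have hσκ : (0:ℝ) ≤ σ / κ := by positivity
  have hXbm : ∀ i, Measurable (Xb i) := by
    intro i; rw [hXb]
    exact Measurable.ite (measurableSet_le (hmeas i).abs measurable_const)
      (hmeas i) measurable_const
  have hXbb : ∀ i ω, |Xb i ω| ≤ σ / κ := by
    intro i ω; rw [hXb]; dsimp only; split_ifs with h
    · exact h
    · simpa using hσκ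
  have hYbm : ∀ i, Measurable (Yb i) := by
    intro i; rw [hYb]; exact Finset.measurable_sum _ (fun j _ => hXbm j)
  set g : ι → Ω → ℝ := fun i ω => |Xb i ω| ^ 3 with hg
  have hgint : ∀ i, Integrable (g i) ℙ := by
    intro i
    apply Integrable.mono' (integrable_const ((σ/κ) ^ 3))
    · exact ((hXbm i).abs.pow_const 3).aestronglyMeasurable
    · filter_upwards with ω
      rw [Real.norm_eq_abs, abs_of_nonneg (by positivity)]
      exact pow_le_pow_left₀ (abs_nonneg _) (hXbb i ω) 3
  set G : ι → ℝ := fun i => ∫ ω, g i ω with hG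
  have hG0 : ∀ i, 0 ≤ G i := fun i => integral_nonneg (fun ω => by positivity)
  have hYbb : ∀ i ω, |Yb i ω| ≤ ∑ j ∈ A i, |Xb j ω| := by
    intro i ω; rw [hYb]; exact Finset.abs_sum_le_sum_abs _ _
  have hYσ : ∀ i ∈ J, ∀ ω, |Yb i ω| ≤ σ := by
    intro i hi ω
    calc |Yb i ω| ≤ ∑ j ∈ A i, |Xb j ω| := hYbb i ω
      _ ≤ ∑ j ∈ A i, (σ / κ) := Finset.sum_le_sum (fun j _ => hXbb j ω)
      _ = (A i).card * (σ / κ) := by rw [Finset.sum_const, nsmul_eq_mul]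
      _ ≤ κ * (σ / κ) := mul_le_mul_of_nonneg_right (hκA i hi) hσκ
      _ = σ := by field_simp
  -- integrability of product
  have hprodint : ∀ i ∈ J, Integrable (fun ω => (Xb i ω) ^ 2 * (Yb i ω) ^ 2) ℙ := by
    intro i hi
    apply Integrable.mono' (integrable_const ((σ/κ) ^ 2 * σ ^ 2))
    · exact (((hXbm i).pow_const 2).mul ((hYbm i).pow_const 2)).aestronglyMeasurable
    · filter_upwards with ω
      rw [Real.norm_eq_abs, abs_mul, abs_pow, abs_pow]
      exact mul_le_mul (pow_le_pow_left₀ (abs_nonneg _) (hXbb i ω) 2)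
        (pow_le_pow_left₀ (abs_nonneg _) (hYσ i hi ω) 2) (by positivity) (by positivity)
  -- key per-i bound
  have key : ∀ i ∈ J, (∫ ω, (Xb i ω) ^ 2 * (Yb i ω) ^ 2)
      ≤ σ * ∑ j ∈ A i, (2/3 * G i + 1/3 * G j) := by
    intro i hi
    have hrint : Integrable (fun ω => σ * ∑ j ∈ A i, (2/3 * g i ω + 1/3 * g j ω)) ℙ := by
      apply Integrable.const_mul
      apply integrable_finset_sum
      intro j _
      exact ((hgint i).const_mul _).add ((hgint j).const_mul _)
    have hptw : ∀ ω, (Xb i ω) ^ 2 * (Yb i ω) ^ 2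
        ≤ σ * ∑ j ∈ A i, (2/3 * g i ω + 1/3 * g j ω) := by
      intro ω
      have h1 : (Yb i ω) ^ 2 ≤ σ * ∑ j ∈ A i, |Xb j ω| := by
        rw [← sq_abs, sq]
        exact mul_le_mul (hYσ i hi ω) (hYbb i ω) (abs_nonneg _) hσ.le
      calc (Xb i ω) ^ 2 * (Yb i ω) ^ 2
          ≤ (Xb i ω) ^ 2 * (σ * ∑ j ∈ A i, |Xb j ω|) :=
            mul_le_mul_of_nonneg_left h1 (sq_nonneg _)
        _ = σ * ∑ j ∈ A i, |Xb i ω| ^ 2 * |Xb j ω| := by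
            simp only [Finset.mul_sum]
            refine Finset.sum_congr rfl fun j _ => ?_
            rw [sq_abs]; ring
        _ ≤ σ * ∑ j ∈ A i, (2/3 * g i ω + 1/3 * g j ω) := by
            apply mul_le_mul_of_nonneg_left _ hσ.le
            exact Finset.sum_le_sum fun j _ =>
              amgm_aux _ _ (abs_nonneg _) (abs_nonneg _)
    calc (∫ ω, (Xb i ω) ^ 2 * (Yb i ω) ^ 2)
        ≤ ∫ ω, σ * ∑ j ∈ A i, (2/3 * g i ω + 1/3 * g j ω) :=
          integral_mono (hprodint i hi) hrint hptw
      _ = σ * ∑ j ∈ A i, (2/3 * G i + 1/3 * G j) := by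
          rw [integral_const_mul,
            show (∫ a, ∑ j ∈ A i, (2/3 * g i a + 1/3 * g j a))
                = ∑ j ∈ A i, ∫ a, (2/3 * g i a + 1/3 * g j a) from
              integral_finset_sum _
                (fun j _ => ((hgint i).const_mul _).add ((hgint j).const_mul _))]
          congr 1
          refine Finset.sum_congr rfl fun j _ => ?_
          rw [integral_add ((hgint i).const_mul _) ((hgint j).const_mul _),
            integral_const_mul, integral_const_mul]
  -- combinatorial double sum bound
  have hsum : ∑ i ∈ J, ∑ j ∈ A i, (2/3 * G i + 1/3 * G j) ≤ κ * ∑ i ∈ J, G i := by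
    have hsplit : ∑ i ∈ J, ∑ j ∈ A i, (2/3 * G i + 1/3 * G j)
        = (∑ i ∈ J, ((A i).card : ℝ) * (2/3 * G i))
          + ∑ i ∈ J, ∑ j ∈ A i, (1/3 * G j) := by
      rw [← Finset.sum_add_distrib]
      refine Finset.sum_congr rfl fun i _ => ?_
      rw [Finset.sum_add_distrib, Finset.sum_const, nsmul_eq_mul]
    have hswap : ∑ i ∈ J, ∑ j ∈ A i, (1/3 * G j)
        = ∑ j ∈ J, ((J.filter fun i => j ∈ A i).card : ℝ) * (1/3 * G j) := by
      have h1 : ∀ i ∈ J, ∑ j ∈ A i, (1/3 * G j)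
          = ∑ j ∈ J, if j ∈ A i then 1/3 * G j else 0 := by
        intro i hi
        rw [← Finset.sum_filter]
        congr 1
        rw [Finset.filter_mem_eq_inter, Finset.inter_eq_right.mpr (hAJ i hi)]
      rw [Finset.sum_congr rfl h1, Finset.sum_comm]
      refine Finset.sum_congr rfl fun j _ => ?_
      rw [← Finset.sum_filter, Finset.sum_const, nsmul_eq_mul]
    rw [hsplit, hswap]
    have h2 : ∀ i ∈ J, ((A i).card : ℝ) * (2/3 * G i) ≤ κ * (2/3 * G i) := by
      intro i hi
      exact mul_le_mul_of_nonneg_right (hκA i hi) (mul_nonneg (by norm_num) (hG0 i))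
    have h3 : ∀ j ∈ J, ((J.filter fun i => j ∈ A i).card : ℝ) * (1/3 * G j)
        ≤ κ * (1/3 * G j) := by
      intro j hj
      exact mul_le_mul_of_nonneg_right (hκA' j hj) (mul_nonneg (by norm_num) (hG0 j))
    calc (∑ i ∈ J, ((A i).card : ℝ) * (2/3 * G i))
          + ∑ j ∈ J, ((J.filter fun i => j ∈ A i).card : ℝ) * (1/3 * G j)
        ≤ (∑ i ∈ J, κ * (2/3 * G i)) + ∑ j ∈ J, κ * (1/3 * G j) :=
          add_le_add (Finset.sum_le_sum h2) (Finset.sum_le_sum h3)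
      _ = κ * ∑ i ∈ J, G i := by
          rw [← Finset.sum_add_distrib, Finset.mul_sum]
          refine Finset.sum_congr rfl fun i _ => ?_
          ring
  -- identify β₃ integrals with G
  have hGeq : ∀ i, G i = ∫ ω, (if |X i ω| ≤ σ / κ then |X i ω| ^ 3 else 0) := by
    intro i
    refine congrArg _ (funext fun ω => ?_)
    simp only [hg, hXb]
    split_ifs with h
    · rfl
    · simp
  have hrhs : κ * σ ^ 4 * β₃ = σ * (κ * ∑ i ∈ J, G i) := by
    rw [hβ₃, Finset.sum_congr rfl (fun i _ => (hGeq i).symm)]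
    have h4 : σ ^ 4 * σ⁻¹ ^ 3 = σ := by field_simp
    linear_combination (κ * ∑ i ∈ J, G i) * h4
  calc (∑ i ∈ J, ∫ ω, (Xb i ω) ^ 2 * (Yb i ω) ^ 2)
      ≤ ∑ i ∈ J, σ * ∑ j ∈ A i, (2/3 * G i + 1/3 * G j) := Finset.sum_le_sum key
    _ = σ * ∑ i ∈ J, ∑ j ∈ A i, (2/3 * G i + 1/3 * G j) := by rw [Finset.mul_sum]
    _ ≤ σ * (κ * ∑ i ∈ J, G i) := mul_le_mul_of_nonneg_left hsum hσ.le
    _ = κ * σ ^ 4 * β₃ := hrhs.symm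
end

section
/- For the piecewise smoothing function f_{a,b,v} defined below (with α > 0, a ≤ b, v > 0), its derivative satisfies f'_{a,b,v}(w) = 1 for z + a/v ≤ w ≤ z + b/v, f'_{a,b,v}(w) = 0 for w < z + (a−α)/v or w > z + (b+α)/v, f'_{a,b,v} is Lipschitz, and ‖f_{a,b,v}‖_∞ ≤ (b − a + α)/(2v). -/
set_option maxHeartbeats 1000000

open MeasureTheory Filter Set

/-- Properties of the piecewise smoothing function `f_{a,b,v}` used in the
concentration inequality argument. -/
theorem smoothing_function_properties
    (z α a b v : ℝ) (hα : 0 < α) (hab : a ≤ b) (hv : 0 < v)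
    (f : ℝ → ℝ)
    (hf : f = fun w =>
      if w ≤ z + (a - α) / v then -(b - a + α) / (2 * v)
      else if w ≤ z + a / v then
        v / (2 * α) * (w - z - (a - α) / v) ^ 2 - (b - a + α) / (2 * v)
      else if w ≤ z + b / v then w - z - (a + b) / (2 * v)
      else if w ≤ z + (b + α) / v then
        -(v / (2 * α)) * (w - z - (b + α) / v) ^ 2 + (b - a + α) / (2 * v)
      else (b - a + α) / (2 * v)) :
    (∀ w : ℝ, z + a / v ≤ w → w ≤ z + b / v → deriv f w = 1) ∧
    (∀ w : ℝ, w < z + (a - α) / v ∨ z + (b + α) / v < w → deriv f w = 0) ∧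
    (∃ L : NNReal, LipschitzWith L (deriv f)) ∧
    (∀ w : ℝ, |f w| ≤ (b - a + α) / (2 * v)) := by
  have hαv : (0:ℝ) < α / v := div_pos hα hv
  have key1 : a / v - (a - α) / v = α / v := by field_simp; ring
  have key2 : (b + α) / v - b / v = α / v := by field_simp; ring
  have key3 : b / v - (a - α) / v ≥ α / v := by
    rw [div_sub_div_same, ge_iff_le]; gcongr; linarith
  have hc12 : z + (a - α) / v < z + a / v := by linarith
  have hc23 : z + a / v ≤ z + b / v := by gcongr
  have hc34 : z + b / v < z + (b + α) / v := by linarith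
  have hC : (0:ℝ) ≤ (b - a + α) / (2 * v) := by
    apply div_nonneg (by linarith) (by linarith)
  -- the derivative function
  set g : ℝ → ℝ := fun w => v / α *
      (min (max (w - (z + (a - α) / v)) 0) (α / v)
       - min (max (w - (z + b / v)) 0) (α / v)) with hg
  -- derivatives of the pieces
  have hp1 : ∀ w : ℝ, HasDerivAt (fun _ : ℝ => -(b - a + α) / (2 * v)) 0 w :=
    fun w => hasDerivAt_const w _
  have hp5 : ∀ w : ℝ, HasDerivAt (fun _ : ℝ => (b - a + α) / (2 * v)) 0 w :=
    fun w => hasDerivAt_const w _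
  have hp2 : ∀ w : ℝ, HasDerivAt
      (fun x => v / (2 * α) * (x - z - (a - α) / v) ^ 2 - (b - a + α) / (2 * v))
      (v / α * (w - z - (a - α) / v)) w := by
    intro w
    have h : HasDerivAt (fun x : ℝ => x - z - (a - α) / v) 1 w := by
      simpa using ((hasDerivAt_id w).sub_const z).sub_const ((a - α) / v)
    have h2 := ((h.pow 2).const_mul (v / (2 * α))).sub_const ((b - a + α) / (2 * v))
    refine h2.congr_deriv ?_
    norm_num; field_simp
  have hp3 : ∀ w : ℝ, HasDerivAt (fun x : ℝ => x - z - (a + b) / (2 * v)) 1 w :=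
    fun w => by simpa using ((hasDerivAt_id w).sub_const z).sub_const ((a + b) / (2 * v))
  have hp4 : ∀ w : ℝ, HasDerivAt
      (fun x => -(v / (2 * α)) * (x - z - (b + α) / v) ^ 2 + (b - a + α) / (2 * v))
      (-(v / α) * (w - z - (b + α) / v)) w := by
    intro w
    have h : HasDerivAt (fun x : ℝ => x - z - (b + α) / v) 1 w := by
      simpa using ((hasDerivAt_id w).sub_const z).sub_const ((b + α) / v)
    have h2 := ((h.pow 2).const_mul (-(v / (2 * α)))).add_const ((b - a + α) / (2 * v))
    refine h2.congr_deriv ?_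
    norm_num; field_simp
  -- value of g in each region
  have hg1 : ∀ w : ℝ, w ≤ z + (a - α) / v → g w = 0 := by
    intro w hw
    simp only [hg]
    rw [max_eq_right (by linarith : w - (z + (a - α) / v) ≤ 0),
      max_eq_right (by linarith : w - (z + b / v) ≤ 0), sub_self, mul_zero]
  have hg2 : ∀ w : ℝ, z + (a - α) / v ≤ w → w ≤ z + a / v →
      g w = v / α * (w - z - (a - α) / v) := by
    intro w hw1 hw2
    simp only [hg]
    rw [max_eq_left (by linarith : (0:ℝ) ≤ w - (z + (a - α) / v)),
      max_eq_right (by linarith : w - (z + b / v) ≤ 0),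
      min_eq_left (by linarith : w - (z + (a - α) / v) ≤ α / v),
      min_eq_left hαv.le, sub_zero]
    ring_nf
  have hg3 : ∀ w : ℝ, z + a / v ≤ w → w ≤ z + b / v → g w = 1 := by
    intro w hw1 hw2
    simp only [hg]
    rw [max_eq_left (by linarith : (0:ℝ) ≤ w - (z + (a - α) / v)),
      max_eq_right (by linarith : w - (z + b / v) ≤ 0),
      min_eq_right (by linarith : α / v ≤ w - (z + (a - α) / v)),
      min_eq_left hαv.le, sub_zero]
    field_simp
  have hg4 : ∀ w : ℝ, z + b / v ≤ w → w ≤ z + (b + α) / v →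
      g w = -(v / α) * (w - z - (b + α) / v) := by
    intro w hw1 hw2
    simp only [hg]
    rw [max_eq_left (by linarith : (0:ℝ) ≤ w - (z + (a - α) / v)),
      max_eq_left (by linarith : (0:ℝ) ≤ w - (z + b / v)),
      min_eq_right (by linarith : α / v ≤ w - (z + (a - α) / v)),
      min_eq_left (by linarith : w - (z + b / v) ≤ α / v)]
    field_simp
    ring
  have hg5 : ∀ w : ℝ, z + (b + α) / v ≤ w → g w = 0 := by
    intro w hw
    simp only [hg]
    rw [max_eq_left (by linarith : (0:ℝ) ≤ w - (z + (a - α) / v)),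
      max_eq_left (by linarith : (0:ℝ) ≤ w - (z + b / v)),
      min_eq_right (by linarith : α / v ≤ w - (z + (a - α) / v)),
      min_eq_right (by linarith : α / v ≤ w - (z + b / v)), sub_self, mul_zero]
  -- f equals each piece on the relevant set
  have hf1 : ∀ x : ℝ, x ≤ z + (a - α) / v → f x = -(b - a + α) / (2 * v) := by
    intro x hx; rw [hf]; simp only [if_pos hx]
  have hf2 : ∀ x : ℝ, z + (a - α) / v < x → x ≤ z + a / v →
      f x = v / (2 * α) * (x - z - (a - α) / v) ^ 2 - (b - a + α) / (2 * v) := by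
    intro x hx1 hx2; rw [hf]; simp only [if_neg (not_le.mpr hx1), if_pos hx2]
  have hf3 : ∀ x : ℝ, z + a / v < x → x ≤ z + b / v →
      f x = x - z - (a + b) / (2 * v) := by
    intro x hx1 hx2
    rw [hf]
    simp only [if_neg (not_le.mpr (lt_trans hc12 hx1)), if_neg (not_le.mpr hx1), if_pos hx2]
  have hf4 : ∀ x : ℝ, z + b / v < x → x ≤ z + (b + α) / v →
      f x = -(v / (2 * α)) * (x - z - (b + α) / v) ^ 2 + (b - a + α) / (2 * v) := by
    intro x hx1 hx2
    rw [hf]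
    simp only [if_neg (not_le.mpr (lt_trans hc12 (lt_of_le_of_lt hc23 hx1))),
      if_neg (not_le.mpr (lt_of_le_of_lt hc23 hx1)), if_neg (not_le.mpr hx1), if_pos hx2]
  have hf5 : ∀ x : ℝ, z + (b + α) / v < x → f x = (b - a + α) / (2 * v) := by
    intro x hx
    rw [hf]
    have h4 := lt_trans hc34 hx
    simp only [if_neg (not_le.mpr (lt_trans hc12 (lt_of_le_of_lt hc23 h4))),
      if_neg (not_le.mpr (lt_of_le_of_lt hc23 h4)), if_neg (not_le.mpr h4),
      if_neg (not_le.mpr hx)]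
  -- f has derivative g everywhere
  have hderiv : ∀ w : ℝ, HasDerivAt f (g w) w := by
    intro w
    rcases lt_trichotomy w (z + (a - α) / v) with h1 | h1 | h1
    · -- region 1 interior
      rw [hg1 w h1.le]
      refine (hp1 w).congr_of_eventuallyEq ?_
      filter_upwards [eventually_lt_nhds h1] with x hx using hf1 x hx.le
    · -- boundary c1
      subst h1
      set w := z + (a - α) / v with hw
      rw [hg1 w le_rfl]
      have hL : HasDerivWithinAt f 0 (Iic w) w := by
        refine ((hp1 w).hasDerivWithinAt).congr_of_eventuallyEq ?_ (hf1 w le_rfl)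
        filter_upwards [eventually_mem_nhdsWithin] with x hx using hf1 x hx
      have hR : HasDerivWithinAt f 0 (Ici w) w := by
        have h0 : (0:ℝ) = v / α * (w - z - (a - α) / v) := by
          rw [hw]; ring_nf
        rw [h0]
        have hvalR : f w = v / (2 * α) * (w - z - (a - α) / v) ^ 2 - (b - a + α) / (2 * v) := by
          rw [hf1 w le_rfl, hw]; ring_nf
        refine ((hp2 w).hasDerivWithinAt).congr_of_eventuallyEq ?_ hvalR
        have hmem : Iio (z + a / v) ∈ nhdsWithin w (Ici w) :=
          mem_nhdsWithin_of_mem_nhds (Iio_mem_nhds hc12)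
        filter_upwards [hmem, eventually_mem_nhdsWithin] with x hx1 hx2
        rcases eq_or_lt_of_le (mem_Ici.mp hx2) with h | h
        · rw [← h]; exact hvalR
        · exact hf2 x h hx1.le
      have h := hL.union hR
      rw [Iic_union_Ici] at h
      exact hasDerivWithinAt_univ.mp h
    rcases lt_trichotomy w (z + a / v) with h2 | h2 | h2
    · -- region 2 interior
      rw [hg2 w h1.le h2.le]
      refine (hp2 w).congr_of_eventuallyEq ?_
      filter_upwards [eventually_gt_nhds h1, eventually_lt_nhds h2] with x hx1 hx2 using
        hf2 x hx1 hx2.le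
    · -- boundary c2
      subst h2
      set w := z + a / v with hw
      rw [hg3 w le_rfl hc23]
      have hwt : w - z - (a - α) / v = α / v := by rw [hw]; linarith
      have hval : f w = v / (2 * α) * (w - z - (a - α) / v) ^ 2 - (b - a + α) / (2 * v) :=
        hf2 w h1 le_rfl
      have hval' : f w = w - z - (a + b) / (2 * v) := by
        rw [hval, hwt, hw]
        field_simp
        ring
      have hL : HasDerivWithinAt f 1 (Iic w) w := by
        have h0 : (1:ℝ) = v / α * (w - z - (a - α) / v) := by
          rw [hwt]; field_simp
        rw [h0]
        refine ((hp2 w).hasDerivWithinAt).congr_of_eventuallyEq ?_ hval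
        have hmem : Ioi (z + (a - α) / v) ∈ nhdsWithin w (Iic w) :=
          mem_nhdsWithin_of_mem_nhds (Ioi_mem_nhds h1)
        filter_upwards [hmem, eventually_mem_nhdsWithin] with x hx1 hx2 using hf2 x hx1 hx2
      have hR : HasDerivWithinAt f 1 (Ici w) w := by
        rcases eq_or_lt_of_le hc23 with heq | hlt
        · -- degenerate case: z + a/v = z + b/v, use piece 4 on the right
          have hbv : a / v = b / v := by linarith
          have hwt4 : w - z - (b + α) / v = -(α / v) := by rw [hw, hbv]; linarith
          have h0 : (1:ℝ) = -(v / α) * (w - z - (b + α) / v) := by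
            rw [hwt4]; field_simp
          rw [h0]
          have hval4 : f w = -(v / (2 * α)) * (w - z - (b + α) / v) ^ 2
              + (b - a + α) / (2 * v) := by
            rw [hval, hwt, hwt4]
            have hba : a = b := mul_right_cancel₀ hv.ne'
              (by rw [div_eq_div_iff hv.ne' hv.ne'] at hbv; exact hbv)
            rw [hba]
            field_simp
            ring
          refine ((hp4 w).hasDerivWithinAt).congr_of_eventuallyEq ?_ hval4
          have hmem : Iio (z + (b + α) / v) ∈ nhdsWithin w (Ici w) :=
            mem_nhdsWithin_of_mem_nhds (Iio_mem_nhds (by rw [← heq] at hc34; exact hc34))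
          filter_upwards [hmem, eventually_mem_nhdsWithin] with x hx1 hx2
          rcases eq_or_lt_of_le (mem_Ici.mp hx2) with h | h
          · rw [← h]; exact hval4
          · exact hf4 x (by rw [← heq]; exact h) hx1.le
        · refine ((hp3 w).hasDerivWithinAt).congr_of_eventuallyEq ?_ hval'
          have hmem : Iio (z + b / v) ∈ nhdsWithin w (Ici w) :=
            mem_nhdsWithin_of_mem_nhds (Iio_mem_nhds hlt)
          filter_upwards [hmem, eventually_mem_nhdsWithin] with x hx1 hx2
          rcases eq_or_lt_of_le (mem_Ici.mp hx2) with h | h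
          · rw [← h]; exact hval'
          · exact hf3 x h hx1.le
      have h := hL.union hR
      rw [Iic_union_Ici] at h
      exact hasDerivWithinAt_univ.mp h
    rcases lt_trichotomy w (z + b / v) with h3 | h3 | h3
    · -- region 3 interior
      rw [hg3 w h2.le h3.le]
      refine (hp3 w).congr_of_eventuallyEq ?_
      filter_upwards [eventually_gt_nhds h2, eventually_lt_nhds h3] with x hx1 hx2 using
        hf3 x hx1 hx2.le
    · -- boundary c3
      subst h3
      set w := z + b / v with hw
      rw [hg3 w hc23 le_rfl]
      have hwt4 : w - z - (b + α) / v = -(α / v) := by rw [hw]; linarith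
      have hval4 : f w = -(v / (2 * α)) * (w - z - (b + α) / v) ^ 2
          + (b - a + α) / (2 * v) := by
        rcases eq_or_lt_of_le hc23 with heq | hlt
        · have hval : f w = v / (2 * α) * (w - z - (a - α) / v) ^ 2 - (b - a + α) / (2 * v) :=
            hf2 w (lt_of_lt_of_le hc12 hc23) (le_of_eq heq.symm)
          have hwt : w - z - (a - α) / v = α / v := by
            rw [hw]
            have hbv : a / v = b / v := by linarith
            rw [← hbv]; linarith
          rw [hval, hwt, hwt4]
          have hbv : a / v = b / v := by linarith
          have hba : a = b := mul_right_cancel₀ hv.ne'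
            (by rw [div_eq_div_iff hv.ne' hv.ne'] at hbv; exact hbv)
          rw [hba]
          field_simp
          ring
        · have hval : f w = w - z - (a + b) / (2 * v) := hf3 w hlt le_rfl
          rw [hval, hwt4, hw]
          field_simp
          ring
      have hL : HasDerivWithinAt f 1 (Iic w) w := by
        rcases eq_or_lt_of_le hc23 with heq | hlt
        · -- degenerate: use piece 2 on the left
          have hwt : w - z - (a - α) / v = α / v := by
            rw [hw]
            have hbv : a / v = b / v := by linarith
            rw [← hbv]; linarith
          have h0 : (1:ℝ) = v / α * (w - z - (a - α) / v) := by rw [hwt]; field_simp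
          rw [h0]
          have hval2 : f w = v / (2 * α) * (w - z - (a - α) / v) ^ 2
              - (b - a + α) / (2 * v) :=
            hf2 w (lt_of_lt_of_le hc12 hc23) (le_of_eq heq.symm)
          refine ((hp2 w).hasDerivWithinAt).congr_of_eventuallyEq ?_ hval2
          have hmem : Ioi (z + (a - α) / v) ∈ nhdsWithin w (Iic w) :=
            mem_nhdsWithin_of_mem_nhds (Ioi_mem_nhds (lt_of_lt_of_le hc12 hc23))
          filter_upwards [hmem, eventually_mem_nhdsWithin] with x hx1 hx2 using
            hf2 x hx1 (le_of_le_of_eq (hx2 : x ≤ w) heq.symm)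
        · have hval3 : f w = w - z - (a + b) / (2 * v) := hf3 w hlt le_rfl
          refine ((hp3 w).hasDerivWithinAt).congr_of_eventuallyEq ?_ hval3
          have hmem : Ioi (z + a / v) ∈ nhdsWithin w (Iic w) :=
            mem_nhdsWithin_of_mem_nhds (Ioi_mem_nhds hlt)
          filter_upwards [hmem, eventually_mem_nhdsWithin] with x hx1 hx2 using
            hf3 x hx1 hx2
      have hR : HasDerivWithinAt f 1 (Ici w) w := by
        have h0 : (1:ℝ) = -(v / α) * (w - z - (b + α) / v) := by
          rw [hwt4]; field_simp
        rw [h0]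
        refine ((hp4 w).hasDerivWithinAt).congr_of_eventuallyEq ?_ hval4
        have hmem : Iio (z + (b + α) / v) ∈ nhdsWithin w (Ici w) :=
          mem_nhdsWithin_of_mem_nhds (Iio_mem_nhds hc34)
        filter_upwards [hmem, eventually_mem_nhdsWithin] with x hx1 hx2
        rcases eq_or_lt_of_le (mem_Ici.mp hx2) with h | h
        · rw [← h]; exact hval4
        · exact hf4 x h hx1.le
      have h := hL.union hR
      rw [Iic_union_Ici] at h
      exact hasDerivWithinAt_univ.mp h
    rcases lt_trichotomy w (z + (b + α) / v) with h4 | h4 | h4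
    · -- region 4 interior
      rw [hg4 w h3.le h4.le]
      refine (hp4 w).congr_of_eventuallyEq ?_
      filter_upwards [eventually_gt_nhds h3, eventually_lt_nhds h4] with x hx1 hx2 using
        hf4 x hx1 hx2.le
    · -- boundary c4
      subst h4
      set w := z + (b + α) / v with hw
      rw [hg5 w le_rfl]
      have hwt4 : w - z - (b + α) / v = 0 := by rw [hw]; ring
      have hval4 : f w = -(v / (2 * α)) * (w - z - (b + α) / v) ^ 2
          + (b - a + α) / (2 * v) := hf4 w h3 le_rfl
      have hval5 : f w = (b - a + α) / (2 * v) := by rw [hval4, hwt4]; ring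
      have hL : HasDerivWithinAt f 0 (Iic w) w := by
        have h0 : (0:ℝ) = -(v / α) * (w - z - (b + α) / v) := by rw [hwt4]; ring
        rw [h0]
        refine ((hp4 w).hasDerivWithinAt).congr_of_eventuallyEq ?_ hval4
        have hmem : Ioi (z + b / v) ∈ nhdsWithin w (Iic w) :=
          mem_nhdsWithin_of_mem_nhds (Ioi_mem_nhds h3)
        filter_upwards [hmem, eventually_mem_nhdsWithin] with x hx1 hx2 using hf4 x hx1 hx2
      have hR : HasDerivWithinAt f 0 (Ici w) w := by
        refine ((hp5 w).hasDerivWithinAt).congr_of_eventuallyEq ?_ hval5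
        filter_upwards [eventually_mem_nhdsWithin] with x hx
        rcases eq_or_lt_of_le (mem_Ici.mp hx) with h | h
        · rw [← h]; exact hval5
        · exact hf5 x h
      have h := hL.union hR
      rw [Iic_union_Ici] at h
      exact hasDerivWithinAt_univ.mp h
    · -- region 5 interior
      rw [hg5 w h4.le]
      refine (hp5 w).congr_of_eventuallyEq ?_
      filter_upwards [eventually_gt_nhds h4] with x hx using hf5 x hx
  have hdg : deriv f = g := funext fun w => (hderiv w).deriv
  refine ⟨?_, ?_, ?_, ?_⟩
  · intro w hw1 hw2
    rw [hdg]
    exact hg3 w hw1 hw2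
  · intro w hw
    rw [hdg]
    rcases hw with hw | hw
    · exact hg1 w hw.le
    · exact hg5 w hw.le
  · refine ⟨⟨2 * (v / α), by positivity⟩, ?_⟩
    rw [hdg]
    apply LipschitzWith.of_dist_le_mul
    intro x y
    have clamp : ∀ p q c : ℝ, |min p c - min q c| ≤ |p - q| := by
      intro p q c
      rcases le_total p c with h | h <;> rcases le_total q c with h' | h'
      · rw [min_eq_left h, min_eq_left h']
      · rw [min_eq_left h, min_eq_right h']
        rw [abs_sub_le_iff]
        constructor <;> linarith [le_abs_self (p - q), neg_abs_le (p - q)]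
      · rw [min_eq_right h, min_eq_left h']
        rw [abs_sub_le_iff]
        constructor <;> linarith [le_abs_self (p - q), neg_abs_le (p - q)]
      · rw [min_eq_right h, min_eq_right h']
        simp [abs_nonneg]
    have hA : ∀ c : ℝ, |min (max (x - c) 0) (α / v) - min (max (y - c) 0) (α / v)|
        ≤ |x - y| := by
      intro c
      calc |min (max (x - c) 0) (α / v) - min (max (y - c) 0) (α / v)|
          ≤ |max (x - c) 0 - max (y - c) 0| := clamp _ _ _
        _ ≤ |(x - c) - (y - c)| := abs_max_sub_max_le_abs _ _ _
        _ = |x - y| := by ring_nf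
    simp only [Real.dist_eq, hg, NNReal.coe_mk]
    have h1 := hA (z + (a - α) / v)
    have h2 := hA (z + b / v)
    set A1 := min (max (x - (z + (a - α) / v)) 0) (α / v)
    set B1 := min (max (x - (z + b / v)) 0) (α / v)
    set A2 := min (max (y - (z + (a - α) / v)) 0) (α / v)
    set B2 := min (max (y - (z + b / v)) 0) (α / v)
    have he : v / α * (A1 - B1) - v / α * (A2 - B2) = v / α * ((A1 - A2) - (B1 - B2)) := by
      ring
    rw [he, abs_mul, abs_of_pos (div_pos hv hα)]
    have htri : |(A1 - A2) - (B1 - B2)| ≤ |A1 - A2| + |B1 - B2| := abs_sub _ _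
    have hva : (0:ℝ) < v / α := div_pos hv hα
    change v / α * |(A1 - A2) - (B1 - B2)| ≤ 2 * (v / α) * |x - y|
    nlinarith [abs_nonneg (x - y)]
  · intro w
    rcases le_or_gt w (z + (a - α) / v) with h1 | h1
    · rw [hf1 w h1, neg_div, abs_neg, abs_of_nonneg hC]
    rcases le_or_gt w (z + a / v) with h2 | h2
    · rw [hf2 w h1 h2]
      have ht0 : (0:ℝ) < w - z - (a - α) / v := by linarith
      have ht1 : w - z - (a - α) / v ≤ α / v := by linarith
      set t := w - z - (a - α) / v
      have h2α : (0:ℝ) < 2 * α := by linarith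
      have e2 : t ^ 2 ≤ (α / v) * (α / v) := by nlinarith
      have e3 : v / (2 * α) * t ^ 2 ≤ α / (2 * v) := by
        calc v / (2 * α) * t ^ 2 ≤ v / (2 * α) * ((α / v) * (α / v)) := by
              apply mul_le_mul_of_nonneg_left e2 (by positivity)
          _ = α / (2 * v) := by field_simp
      have e4 : α / (2 * v) ≤ (b - a + α) / (2 * v) := by gcongr; linarith
      have e0 : (0:ℝ) ≤ v / (2 * α) * t ^ 2 :=
        mul_nonneg (by positivity) (sq_nonneg t)
      rw [abs_le]
      constructor <;> linarith
    rcases le_or_gt w (z + b / v) with h3 | h3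
    · rw [hf3 w h2 h3]
      have d1 : a / v - (a + b) / (2 * v) = (a - b) / (2 * v) := by field_simp; ring
      have d2 : b / v - (a + b) / (2 * v) = (b - a) / (2 * v) := by field_simp; ring
      have d3 : (a - b) / (2 * v) + (b - a + α) / (2 * v) = α / (2 * v) := by
        rw [← add_div]; ring_nf
      have d4 : (b - a) / (2 * v) + α / (2 * v) = (b - a + α) / (2 * v) := by
        rw [← add_div]
      have hα2 : (0:ℝ) ≤ α / (2 * v) := by positivity
      rw [abs_le]
      constructor <;> linarith
    rcases le_or_gt w (z + (b + α) / v) with h4 | h4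
    · rw [hf4 w h3 h4]
      have ht0 : w - z - (b + α) / v ≤ 0 := by linarith
      have htl : -(α / v) ≤ w - z - (b + α) / v := by linarith
      set t := w - z - (b + α) / v
      have h2α : (0:ℝ) < 2 * α := by linarith
      have e2 : t ^ 2 ≤ (α / v) * (α / v) := by nlinarith
      have e3 : v / (2 * α) * t ^ 2 ≤ α / (2 * v) := by
        calc v / (2 * α) * t ^ 2 ≤ v / (2 * α) * ((α / v) * (α / v)) := by
              apply mul_le_mul_of_nonneg_left e2 (by positivity)
          _ = α / (2 * v) := by field_simp
      have e4 : α / (2 * v) ≤ (b - a + α) / (2 * v) := by gcongr; linarith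
      have e0 : (0:ℝ) ≤ v / (2 * α) * t ^ 2 :=
        mul_nonneg (by positivity) (sq_nonneg t)
      rw [abs_le]
      constructor <;> nlinarith
    · rw [hf5 w h4, abs_of_nonneg hC]
end
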